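/- arXiv:2401.12057 — 7 statements merged into one kernel-verified Lean document; each statement's English description precedes it below -/
import Mathlib

section
/- For α > -1 and integer l ≥ 1, the functions F₁(r) = ((l/(1+α)+1)·r^l + (l/(1+α)-1)·r^{l+2(1+α)})/(1 + r^{2(1+α)}) and F₂(r) = ((l/(1+α)+1)·r^{-l+2(1+α)} + (l/(1+α)-1)·r^{-l})/(1 + r^{2(1+α)}) both solve the ODE φ''(r) + (1/r)·φ'(r) + (8(1+α)²·r^{2α}·e^{U_α(r)} - l²/r²)·φ(r) = 0 on (0,∞), where U_α(r) = -2·log(1 + r^{2α+2}). -/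
open Real

private lemma hdr (p r : ℝ) (hr : 0 < r) :
    HasDerivAt (fun x : ℝ => x ^ p) (p * r ^ (p - 1)) r :=
  Real.hasDerivAt_rpow_const (Or.inl hr.ne')

private lemma hasD1 (A B a b c r : ℝ) (hr : 0 < r) :
    HasDerivAt (fun x : ℝ => (A * x ^ a + B * x ^ b) / (1 + x ^ c))
      (((A * (a * r ^ (a - 1)) + B * (b * r ^ (b - 1))) * (1 + r ^ c)
        - (A * r ^ a + B * r ^ b) * (c * r ^ (c - 1))) / (1 + r ^ c) ^ 2) r := by
  have hden : (0:ℝ) < 1 + r ^ c := by positivity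
  exact (((hdr a r hr).const_mul A).add ((hdr b r hr).const_mul B)).div
    ((hdr c r hr).const_add 1) hden.ne'

private lemma hasD2 (A B a b c r : ℝ) (hr : 0 < r) :
    HasDerivAt (fun x : ℝ =>
      ((A * (a * x ^ (a - 1)) + B * (b * x ^ (b - 1))) * (1 + x ^ c)
        - (A * x ^ a + B * x ^ b) * (c * x ^ (c - 1))) / (1 + x ^ c) ^ 2)
      ((((A * (a * ((a-1) * r ^ (a-1-1))) + B * (b * ((b-1) * r ^ (b-1-1)))) * (1 + r ^ c)
          - (A * r ^ a + B * r ^ b) * (c * ((c-1) * r ^ (c-1-1))))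
            * ((1 + r ^ c) ^ 2)
        - ((A * (a * r ^ (a - 1)) + B * (b * r ^ (b - 1))) * (1 + r ^ c)
            - (A * r ^ a + B * r ^ b) * (c * r ^ (c - 1)))
          * (2 * (1 + r ^ c) * (c * r ^ (c - 1)))) / ((1 + r ^ c) ^ 2) ^ 2) r := by
  have hden : (0:ℝ) < 1 + r ^ c := by positivity
  have hden2 : ((1:ℝ) + r ^ c) ^ 2 ≠ 0 := by positivity
  have t1 : HasDerivAt (fun x : ℝ => A * (a * x ^ (a - 1)) + B * (b * x ^ (b - 1)))
      (A * (a * ((a-1) * r ^ (a-1-1))) + B * (b * ((b-1) * r ^ (b-1-1)))) r :=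
    (((hdr (a-1) r hr).const_mul a).const_mul A).add
      (((hdr (b-1) r hr).const_mul b).const_mul B)
  have t2 : HasDerivAt (fun x : ℝ => 1 + x ^ c) (c * r ^ (c - 1)) r :=
    (hdr c r hr).const_add 1
  have t3 : HasDerivAt (fun x : ℝ => A * x ^ a + B * x ^ b)
      (A * (a * r ^ (a-1)) + B * (b * r ^ (b-1))) r :=
    ((hdr a r hr).const_mul A).add ((hdr b r hr).const_mul B)
  have t4 : HasDerivAt (fun x : ℝ => c * x ^ (c-1)) (c * ((c-1) * r ^ (c-1-1))) r :=
    (hdr (c-1) r hr).const_mul c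
  have hN : HasDerivAt (fun x : ℝ =>
      (A * (a * x ^ (a - 1)) + B * (b * x ^ (b - 1))) * (1 + x ^ c)
        - (A * x ^ a + B * x ^ b) * (c * x ^ (c - 1)))
      ((A * (a * ((a-1) * r ^ (a-1-1))) + B * (b * ((b-1) * r ^ (b-1-1)))) * (1 + r ^ c)
        - (A * r ^ a + B * r ^ b) * (c * ((c-1) * r ^ (c-1-1)))) r := by
    have := (t1.mul t2).sub (t3.mul t4)
    exact this.congr_deriv (by ring)
  have hD : HasDerivAt (fun x : ℝ => ((1:ℝ) + x ^ c) ^ 2)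
      ((2:ℕ) * (1 + r ^ c) ^ (2-1) * (c * r ^ (c-1))) r := t2.pow 2
  have := hN.div hD hden2
  exact this.congr_deriv (by push_cast; ring)

private lemma key (A B a b c : ℝ) {F : ℝ → ℝ}
    (hF : F = fun x : ℝ => (A * x ^ a + B * x ^ b) / (1 + x ^ c)) {r : ℝ} (hr : 0 < r) :
    deriv F r = ((A * (a * r ^ (a - 1)) + B * (b * r ^ (b - 1))) * (1 + r ^ c)
        - (A * r ^ a + B * r ^ b) * (c * r ^ (c - 1))) / (1 + r ^ c) ^ 2 ∧
    deriv (deriv F) r =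
      (((A * (a * ((a-1) * r ^ (a-1-1))) + B * (b * ((b-1) * r ^ (b-1-1)))) * (1 + r ^ c)
          - (A * r ^ a + B * r ^ b) * (c * ((c-1) * r ^ (c-1-1))))
            * ((1 + r ^ c) ^ 2)
        - ((A * (a * r ^ (a - 1)) + B * (b * r ^ (b - 1))) * (1 + r ^ c)
            - (A * r ^ a + B * r ^ b) * (c * r ^ (c - 1)))
          * (2 * (1 + r ^ c) * (c * r ^ (c - 1)))) / ((1 + r ^ c) ^ 2) ^ 2 := by
  subst hF
  refine ⟨(hasD1 A B a b c r hr).deriv, ?_⟩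
  have hev : deriv (fun x : ℝ => (A * x ^ a + B * x ^ b) / (1 + x ^ c)) =ᶠ[nhds r]
      (fun x : ℝ => ((A * (a * x ^ (a - 1)) + B * (b * x ^ (b - 1))) * (1 + x ^ c)
        - (A * x ^ a + B * x ^ b) * (c * x ^ (c - 1))) / (1 + x ^ c) ^ 2) := by
    filter_upwards [isOpen_Ioi.mem_nhds hr] with x hx
    exact (hasD1 A B a b c x hx).deriv
  rw [hev.deriv_eq]
  exact (hasD2 A B a b c r hr).deriv

set_option maxHeartbeats 4000000 in
theorem stmt2 (α : ℝ) (hα : -1 < α) (l : ℕ) (hl : 1 ≤ l)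
    (F₁ F₂ U : ℝ → ℝ)
    (hF₁ : ∀ r, F₁ r = (((l : ℝ) / (1 + α) + 1) * r ^ (l : ℝ)
        + ((l : ℝ) / (1 + α) - 1) * r ^ ((l : ℝ) + 2 * (1 + α))) / (1 + r ^ (2 * (1 + α))))
    (hF₂ : ∀ r, F₂ r = (((l : ℝ) / (1 + α) + 1) * r ^ (-(l : ℝ) + 2 * (1 + α))
        + ((l : ℝ) / (1 + α) - 1) * r ^ (-(l : ℝ))) / (1 + r ^ (2 * (1 + α))))
    (hU : ∀ r, U r = -2 * Real.log (1 + r ^ (2 * α + 2))) :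
    ∀ r : ℝ, 0 < r →
      (deriv (deriv F₁) r + (1 / r) * deriv F₁ r
        + (8 * (1 + α) ^ 2 * r ^ (2 * α) * Real.exp (U r) - (l : ℝ) ^ 2 / r ^ 2) * F₁ r = 0) ∧
      (deriv (deriv F₂) r + (1 / r) * deriv F₂ r
        + (8 * (1 + α) ^ 2 * r ^ (2 * α) * Real.exp (U r) - (l : ℝ) ^ 2 / r ^ 2) * F₂ r = 0) := by
  intro r hr
  have h1α : (0:ℝ) < 1 + α := by linarith
  have hden : (0:ℝ) < 1 + r ^ (2 * (1 + α)) := by positivity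
  obtain ⟨m, hm⟩ : ∃ m : ℝ, (l : ℝ) = m * (1 + α) := ⟨(l:ℝ)/(1+α), by field_simp⟩
  have hm' : (l : ℝ) / (1 + α) = m := by rw [hm]; field_simp
  have hexp : Real.exp (U r) = ((1 + r ^ (2 * (1 + α))) ^ 2)⁻¹ := by
    rw [hU, show (2*α+2 : ℝ) = 2*(1+α) by ring,
      show (-2 : ℝ) * Real.log (1 + r ^ (2*(1+α)))
        = -(Real.log (1 + r ^ (2*(1+α))) + Real.log (1 + r ^ (2*(1+α)))) by ring,
      Real.exp_neg, Real.exp_add, Real.exp_log hden, sq]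
  have hp : ∀ p : ℝ, r ^ (p - 1) = r ^ p * r⁻¹ := fun p => by
    rw [Real.rpow_sub_one hr.ne', div_eq_mul_inv]
  constructor
  · have hFe : F₁ = fun x : ℝ => ((m+1) * x ^ (l:ℝ) + (m-1) * x ^ ((l:ℝ) + 2*(1+α))) / (1 + x ^ (2*(1+α))) :=
      funext fun x => by rw [hF₁ x, hm']
    obtain ⟨e1, e2⟩ := key (m+1) (m-1) ((l:ℝ)) ((l:ℝ) + 2*(1+α)) (2*(1+α)) hFe hr
    rw [e1, e2, hF₁ r, hexp, hm']
    rw [show (2*α : ℝ) = 2*(1+α) - 1 - 1 by ring]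
    have hb : r ^ ((l:ℝ) + 2*(1+α)) = r ^ (l:ℝ) * r ^ (2*(1+α)) := Real.rpow_add hr _ _
    simp only [hp, hb]
    have hX : (0:ℝ) < r ^ ((l:ℝ)) := Real.rpow_pos_of_pos hr _
    have hQ : (0:ℝ) < r ^ ((2*(1+α)):ℝ) := Real.rpow_pos_of_pos hr _
    generalize hXg : r ^ ((l:ℝ)) = X at hX ⊢
    generalize hQg : r ^ ((2*(1+α)):ℝ) = Q at hQ ⊢
    rw [hm]
    field_simp
    ring
  · have hFe : F₂ = fun x : ℝ => ((m+1) * x ^ (-(l:ℝ) + 2*(1+α)) + (m-1) * x ^ (-(l:ℝ))) / (1 + x ^ (2*(1+α))) :=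
      funext fun x => by rw [hF₂ x, hm']
    obtain ⟨e1, e2⟩ := key (m+1) (m-1) (-(l:ℝ) + 2*(1+α)) (-(l:ℝ)) (2*(1+α)) hFe hr
    rw [e1, e2, hF₂ r, hexp, hm']
    rw [show (2*α : ℝ) = 2*(1+α) - 1 - 1 by ring]
    have ha : r ^ (-(l:ℝ) + 2*(1+α)) = r ^ (-(l:ℝ)) * r ^ (2*(1+α)) := Real.rpow_add hr _ _
    simp only [hp, ha]
    have hY : (0:ℝ) < r ^ (-(l:ℝ)) := Real.rpow_pos_of_pos hr _
    have hQ : (0:ℝ) < r ^ ((2*(1+α)):ℝ) := Real.rpow_pos_of_pos hr _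
    generalize hYg : r ^ (-(l:ℝ)) = Y at hY ⊢
    generalize hQg : r ^ ((2*(1+α)):ℝ) = Q at hQ ⊢
    rw [hm]
    field_simp
    ring
end

section
/- For every α > 0 with α ∉ ℕ, the identity ∫₀^∞ s^{2α+3}·e^{U(s)}·(1 - s^{2α+2})·((2+α)/α - s^{2α+2})²/(1+s^{2α+2})³ ds = 0 holds, where U(s) = -2·log(1 + s^{2α+2}); i.e., ∫₀^∞ s^{2α+3}·(1-s^{2α+2})·((2+α)/α - s^{2α+2})²/(1+s^{2α+2})⁵ ds = 0. -/
open Real MeasureTheory Set Filter Topology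

theorem stmt5 (α : ℝ) (hα : 0 < α) (hαn : ∀ n : ℕ, α ≠ n) :
    ∫ s in Set.Ioi (0 : ℝ),
      s ^ (2 * α + 3) * (1 - s ^ (2 * α + 2)) * ((2 + α) / α - s ^ (2 * α + 2)) ^ 2
        / (1 + s ^ (2 * α + 2)) ^ 5 = 0 := by
  have hα0 : α ≠ 0 := ne_of_gt hα
  set c : ℝ := (2 + α) / α with hcdef
  have hc1 : 1 < c := by
    rw [hcdef, lt_div_iff₀ hα]; linarith
  set g : ℝ → ℝ := fun s =>
    s ^ (2 * α + 3) * (1 - s ^ (2 * α + 2)) * (c - s ^ (2 * α + 2)) ^ 2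
      / (1 + s ^ (2 * α + 2)) ^ 5 with hgdef
  set F : ℝ → ℝ := fun s =>
    ((α + 2) / (2 * α ^ 2) * s ^ (2 * α + 4) + s ^ (6 * α + 8) / (2 * α))
      / (1 + s ^ (2 * α + 2)) ^ 4 with hFdef
  -- derivative
  have hder : ∀ s ∈ Ioi (0 : ℝ), HasDerivAt F (g s) s := by
    intro s hs
    have hs0 : (0 : ℝ) < s := hs
    have hu : (0 : ℝ) < s ^ (2 * α + 2) := rpow_pos_of_pos hs0 _
    have hden : ((1 : ℝ) + s ^ (2 * α + 2)) ^ 4 ≠ 0 := by positivity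
    have h1 : HasDerivAt (fun x : ℝ => (α + 2) / (2 * α ^ 2) * x ^ (2 * α + 4)
        + x ^ (6 * α + 8) / (2 * α))
        ((α + 2) / (2 * α ^ 2) * ((2 * α + 4) * s ^ (2 * α + 3))
          + (6 * α + 8) * s ^ (6 * α + 7) / (2 * α)) s := by
      have a1 := (Real.hasDerivAt_rpow_const (x := s) (p := 2 * α + 4) (Or.inl hs0.ne')).const_mul
        ((α + 2) / (2 * α ^ 2))
      have a2 := (Real.hasDerivAt_rpow_const (x := s) (p := 6 * α + 8) (Or.inl hs0.ne')).div_const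
        (2 * α)
      have e1 : (2 * α + 4 - 1 : ℝ) = 2 * α + 3 := by ring
      have e2 : (6 * α + 8 - 1 : ℝ) = 6 * α + 7 := by ring
      rw [e1] at a1; rw [e2] at a2
      exact a1.add a2
    have h2 : HasDerivAt (fun x : ℝ => (1 + x ^ (2 * α + 2)) ^ 4)
        ((4 : ℕ) * (1 + s ^ (2 * α + 2)) ^ 3 * ((2 * α + 2) * s ^ (2 * α + 1))) s := by
      have a3 := (Real.hasDerivAt_rpow_const (x := s) (p := 2 * α + 2) (Or.inl hs0.ne')).const_add 1
      have e3 : (2 * α + 2 - 1 : ℝ) = 2 * α + 1 := by ring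
      rw [e3] at a3
      exact a3.pow 4
    have h3 := h1.div h2 hden
    refine h3.congr_deriv ?_
    symm
    -- algebraic identity
    have w : ℝ := s ^ (2 * α + 1)
    have e4 : s ^ (2 * α + 2) = s ^ (2 * α + 1) * s := by
      rw [show (2 * α + 2 : ℝ) = (2 * α + 1) + 1 by ring, rpow_add hs0, rpow_one]
    have e5 : s ^ (2 * α + 3) = s ^ (2 * α + 1) * s * s := by
      rw [show (2 * α + 3 : ℝ) = (2 * α + 1) + 1 + 1 by ring, rpow_add hs0, rpow_add hs0,
        rpow_one]
    have e6 : s ^ (2 * α + 4) = s ^ (2 * α + 1) * s * s * s := by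
      rw [show (2 * α + 4 : ℝ) = (2 * α + 1) + 1 + 1 + 1 by ring, rpow_add hs0, rpow_add hs0,
        rpow_add hs0, rpow_one]
    have e7 : s ^ (6 * α + 7) = s ^ (2 * α + 1) * s ^ (2 * α + 1) * s ^ (2 * α + 1)
        * s * s * s * s := by
      rw [show (6 * α + 7 : ℝ) = (2 * α + 1) + (2 * α + 1) + (2 * α + 1) + 1 + 1 + 1 + 1 by ring,
        rpow_add hs0, rpow_add hs0, rpow_add hs0, rpow_add hs0, rpow_add hs0, rpow_add hs0,
        rpow_one]
    have e8 : s ^ (6 * α + 8) = s ^ (2 * α + 1) * s ^ (2 * α + 1) * s ^ (2 * α + 1)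
        * s * s * s * s * s := by
      rw [show (6 * α + 8 : ℝ) = (2 * α + 1) + (2 * α + 1) + (2 * α + 1) + 1 + 1 + 1 + 1 + 1
        by ring, rpow_add hs0, rpow_add hs0, rpow_add hs0, rpow_add hs0, rpow_add hs0,
        rpow_add hs0, rpow_add hs0, rpow_one]
    have hw0 : (0 : ℝ) < s ^ (2 * α + 1) := rpow_pos_of_pos hs0 _
    have hden1 : (0 : ℝ) < 1 + s ^ (2 * α + 1) * s := by nlinarith
    rw [hgdef, hcdef]
    simp only [e4, e5, e6, e7, e8]
    field_simp
    ring
  -- continuity at 0 from the right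
  have hF0 : F 0 = 0 := by
    rw [hFdef]
    simp only
    rw [Real.zero_rpow (by positivity), Real.zero_rpow (by positivity),
      Real.zero_rpow (by positivity)]
    norm_num
  have hcont : ContinuousWithinAt F (Ici (0 : ℝ)) 0 := by
    apply ContinuousAt.continuousWithinAt
    have c1 : ContinuousAt (fun s : ℝ => s ^ (2 * α + 4)) 0 :=
      Real.continuousAt_rpow_const 0 _ (Or.inr (by positivity))
    have c2 : ContinuousAt (fun s : ℝ => s ^ (6 * α + 8)) 0 :=
      Real.continuousAt_rpow_const 0 _ (Or.inr (by positivity))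
    have c3 : ContinuousAt (fun s : ℝ => s ^ (2 * α + 2)) 0 :=
      Real.continuousAt_rpow_const 0 _ (Or.inr (by positivity))
    have hd0 : ((1 : ℝ) + (0 : ℝ) ^ (2 * α + 2)) ^ 4 ≠ 0 := by
      rw [Real.zero_rpow (by positivity)]; norm_num
    exact (((c1.const_mul _).add (c2.div_const _)).div ((c3.const_add 1).pow 4) hd0)
  -- tendsto at top
  have htop : Tendsto F atTop (𝓝 0) := by
    set C : ℝ := (α + 2) / (2 * α ^ 2) + 1 / (2 * α) with hCdef
    have hCpos : 0 < C := by positivity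
    have hupper : ∀ᶠ s in atTop, F s ≤ C * s ^ (-(2 * α)) := by
      filter_upwards [eventually_ge_atTop (1 : ℝ)] with s hs1
      have hs0 : (0 : ℝ) < s := lt_of_lt_of_le one_pos hs1
      have hu : (0 : ℝ) < s ^ (2 * α + 2) := rpow_pos_of_pos hs0 _
      have h1 : s ^ (2 * α + 4) ≤ s ^ (6 * α + 8) :=
        rpow_le_rpow_of_exponent_le hs1 (by linarith)
      have hnum : (α + 2) / (2 * α ^ 2) * s ^ (2 * α + 4) + s ^ (6 * α + 8) / (2 * α)
          ≤ C * s ^ (6 * α + 8) := by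
        rw [hCdef, add_mul]
        have hmul : (α + 2) / (2 * α ^ 2) * s ^ (2 * α + 4)
            ≤ (α + 2) / (2 * α ^ 2) * s ^ (6 * α + 8) := by
          apply mul_le_mul_of_nonneg_left h1 (by positivity)
        have hmul2 : s ^ (6 * α + 8) / (2 * α) = 1 / (2 * α) * s ^ (6 * α + 8) := by ring
        linarith
      have hdenlb : s ^ (8 * α + 8) ≤ (1 + s ^ (2 * α + 2)) ^ 4 := by
        have h4 : (s ^ (2 * α + 2)) ^ (4 : ℕ) = s ^ (8 * α + 8) := by
          rw [← Real.rpow_natCast (s ^ (2 * α + 2)) 4, ← Real.rpow_mul hs0.le]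
          norm_num; ring_nf
        calc s ^ (8 * α + 8) = (s ^ (2 * α + 2)) ^ (4 : ℕ) := h4.symm
          _ ≤ (1 + s ^ (2 * α + 2)) ^ 4 := by
              apply pow_le_pow_left₀ hu.le (by linarith)
      have hdpos : (0 : ℝ) < s ^ (8 * α + 8) := rpow_pos_of_pos hs0 _
      have key : C * s ^ (6 * α + 8) / s ^ (8 * α + 8) = C * s ^ (-(2 * α)) := by
        rw [mul_div_assoc, ← Real.rpow_sub hs0]
        ring_nf
      calc F s ≤ C * s ^ (6 * α + 8) / (1 + s ^ (2 * α + 2)) ^ 4 := by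
            simp only [hFdef]
            gcongr
        _ ≤ C * s ^ (6 * α + 8) / s ^ (8 * α + 8) := by
            apply div_le_div_of_nonneg_left (by positivity) hdpos hdenlb
        _ = C * s ^ (-(2 * α)) := key
    have hlower : ∀ᶠ s in atTop, (0 : ℝ) ≤ F s := by
      filter_upwards [eventually_ge_atTop (1 : ℝ)] with s hs1
      have hs0 : (0 : ℝ) < s := lt_of_lt_of_le one_pos hs1
      have w1 : (0 : ℝ) ≤ s ^ (2 * α + 4) := (rpow_pos_of_pos hs0 _).le
      have w2 : (0 : ℝ) ≤ s ^ (6 * α + 8) := (rpow_pos_of_pos hs0 _).le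
      rw [hFdef]
      have : (0:ℝ) < 1 + s ^ (2 * α + 2) := by
        have := rpow_pos_of_pos hs0 (2 * α + 2); linarith
      apply div_nonneg
      · apply add_nonneg (mul_nonneg (by positivity) w1) (div_nonneg w2 (by positivity))
      · positivity
    have hCtend : Tendsto (fun s : ℝ => C * s ^ (-(2 * α))) atTop (𝓝 0) := by
      have := (tendsto_rpow_neg_atTop (by linarith : (0:ℝ) < 2 * α)).const_mul C
      simpa using this
    exact tendsto_of_tendsto_of_tendsto_of_le_of_le' tendsto_const_nhds hCtend hlower hupper
  -- integrability
  have hmeas : Measurable g := by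
    rw [hgdef]
    apply Measurable.div
    · exact (((Real.continuous_rpow_const (by positivity)).mul
        (continuous_const.sub (Real.continuous_rpow_const (by positivity)))).mul
        ((continuous_const.sub (Real.continuous_rpow_const (by positivity))).pow 2)).measurable
    · exact ((continuous_const.add (Real.continuous_rpow_const (by positivity))).pow 5).measurable
  have hbound1 : ∀ s ∈ Ioc (0:ℝ) 1, |g s| ≤ c ^ 2 := by
    intro s hs
    have hs0 : (0 : ℝ) < s := hs.1
    have hu : (0 : ℝ) < s ^ (2 * α + 2) := rpow_pos_of_pos hs0 _
    have hu1 : s ^ (2 * α + 2) ≤ 1 := rpow_le_one hs0.le hs.2 (by positivity)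
    have hs3 : s ^ (2 * α + 3) ≤ 1 := rpow_le_one hs0.le hs.2 (by positivity)
    have hs3p : (0:ℝ) ≤ s ^ (2 * α + 3) := (rpow_pos_of_pos hs0 _).le
    have habs : |g s| = s ^ (2 * α + 3) * |1 - s ^ (2 * α + 2)| * (c - s ^ (2 * α + 2)) ^ 2
        / (1 + s ^ (2 * α + 2)) ^ 5 := by
      rw [hgdef]
      rw [abs_div, abs_mul, abs_mul, abs_of_nonneg hs3p,
        abs_of_nonneg (sq_nonneg (c - s ^ (2 * α + 2))),
        abs_of_pos (pow_pos (by linarith : (0:ℝ) < 1 + s ^ (2 * α + 2)) 5)]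
    rw [habs]
    have h2 : |1 - s ^ (2 * α + 2)| ≤ 1 := abs_le.2 ⟨by linarith, by linarith⟩
    have h3 : (c - s ^ (2 * α + 2)) ^ 2 ≤ c ^ 2 := by
      apply pow_le_pow_left₀ (by linarith) (by linarith)
    have h4 : (1:ℝ) ≤ (1 + s ^ (2 * α + 2)) ^ 5 := one_le_pow₀ (by linarith)
    calc s ^ (2 * α + 3) * |1 - s ^ (2 * α + 2)| * (c - s ^ (2 * α + 2)) ^ 2
          / (1 + s ^ (2 * α + 2)) ^ 5
        ≤ 1 * 1 * c ^ 2 / 1 := by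
          gcongr <;> first | positivity | assumption | linarith
      _ = c ^ 2 := by ring
  have hbound2 : ∀ s ∈ Ioi (1:ℝ), |g s| ≤ c ^ 2 * s ^ (-(2 * α) - 1) := by
    intro s hs
    have hs1 : (1:ℝ) < s := hs
    have hs0 : (0 : ℝ) < s := lt_trans one_pos hs1
    have hu : (0 : ℝ) < s ^ (2 * α + 2) := rpow_pos_of_pos hs0 _
    have hs3p : (0:ℝ) < s ^ (2 * α + 3) := rpow_pos_of_pos hs0 _
    have habs : |g s| = s ^ (2 * α + 3) * |1 - s ^ (2 * α + 2)| * (c - s ^ (2 * α + 2)) ^ 2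
        / (1 + s ^ (2 * α + 2)) ^ 5 := by
      rw [hgdef]
      rw [abs_div, abs_mul, abs_mul, abs_of_nonneg hs3p.le,
        abs_of_nonneg (sq_nonneg (c - s ^ (2 * α + 2))),
        abs_of_pos (pow_pos (by linarith : (0:ℝ) < 1 + s ^ (2 * α + 2)) 5)]
    rw [habs]
    have h2 : |1 - s ^ (2 * α + 2)| ≤ 1 + s ^ (2 * α + 2) :=
      abs_le.2 ⟨by linarith, by linarith⟩
    have h3 : (c - s ^ (2 * α + 2)) ^ 2 ≤ (c * (1 + s ^ (2 * α + 2))) ^ 2 := by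
      have habs2 : |c - s ^ (2 * α + 2)| ≤ c * (1 + s ^ (2 * α + 2)) := by
        rw [abs_le]
        constructor
        · nlinarith
        · nlinarith
      calc (c - s ^ (2 * α + 2)) ^ 2 = |c - s ^ (2 * α + 2)| ^ 2 := (sq_abs _).symm
        _ ≤ (c * (1 + s ^ (2 * α + 2))) ^ 2 := by
            apply pow_le_pow_left₀ (abs_nonneg _) habs2
    have h1u : (0:ℝ) < 1 + s ^ (2 * α + 2) := by linarith
    have step1 : s ^ (2 * α + 3) * |1 - s ^ (2 * α + 2)| * (c - s ^ (2 * α + 2)) ^ 2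
          / (1 + s ^ (2 * α + 2)) ^ 5
        ≤ s ^ (2 * α + 3) * (1 + s ^ (2 * α + 2)) * (c * (1 + s ^ (2 * α + 2))) ^ 2
          / (1 + s ^ (2 * α + 2)) ^ 5 := by
      gcongr <;> first | positivity | assumption | linarith
    have step2 : s ^ (2 * α + 3) * (1 + s ^ (2 * α + 2)) * (c * (1 + s ^ (2 * α + 2))) ^ 2
          / (1 + s ^ (2 * α + 2)) ^ 5
        = c ^ 2 * (s ^ (2 * α + 3) / (1 + s ^ (2 * α + 2)) ^ 2) := by
      field_simp
    have step3 : s ^ (2 * α + 3) / (1 + s ^ (2 * α + 2)) ^ 2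
        ≤ s ^ (2 * α + 3) / (s ^ (2 * α + 2)) ^ 2 := by
      apply div_le_div_of_nonneg_left hs3p.le (by positivity)
      apply pow_le_pow_left₀ hu.le (by linarith)
    have step4 : s ^ (2 * α + 3) / (s ^ (2 * α + 2)) ^ 2 = s ^ (-(2 * α) - 1) := by
      rw [← Real.rpow_natCast (s ^ (2 * α + 2)) 2, ← Real.rpow_mul hs0.le,
        ← Real.rpow_sub hs0]
      norm_num
      ring_nf
    calc s ^ (2 * α + 3) * |1 - s ^ (2 * α + 2)| * (c - s ^ (2 * α + 2)) ^ 2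
          / (1 + s ^ (2 * α + 2)) ^ 5
        ≤ c ^ 2 * (s ^ (2 * α + 3) / (1 + s ^ (2 * α + 2)) ^ 2) := step1.trans_eq step2
      _ ≤ c ^ 2 * (s ^ (2 * α + 3) / (s ^ (2 * α + 2)) ^ 2) := by
          apply mul_le_mul_of_nonneg_left step3 (by positivity)
      _ = c ^ 2 * s ^ (-(2 * α) - 1) := by rw [step4]
  have hint1 : IntegrableOn g (Ioc (0:ℝ) 1) := by
    refine Measure.integrableOn_of_bounded (M := c ^ 2) measure_Ioc_lt_top.ne hmeas.aestronglyMeasurable ?_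
    rw [ae_restrict_iff' measurableSet_Ioc]
    filter_upwards with s hs
    rw [Real.norm_eq_abs]
    exact hbound1 s hs
  have hint2 : IntegrableOn g (Ioi (1:ℝ)) := by
    have hmaj : IntegrableOn (fun s : ℝ => c ^ 2 * s ^ (-(2 * α) - 1)) (Ioi (1:ℝ)) := by
      apply Integrable.const_mul
      exact integrableOn_Ioi_rpow_of_lt (by linarith) one_pos
    apply Integrable.mono' hmaj
    · exact hmeas.aestronglyMeasurable.restrict
    · rw [ae_restrict_iff' measurableSet_Ioi]
      filter_upwards with s hs
      simpa using hbound2 s hs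
  have hint : IntegrableOn g (Ioi (0:ℝ)) := by
    have := hint1.union hint2
    rwa [Ioc_union_Ioi_eq_Ioi (by norm_num : (0:ℝ) ≤ 1)] at this
  have := integral_Ioi_of_hasDerivAt_of_tendsto hcont hder hint htop
  rw [hF0, sub_zero] at this
  exact this
end

section
/- Let α > -1 with α ≠ 0, h₀ > 0, a = h₀/(8(1+α)²), ε > 0, and v = (v₁,v₂) ∈ ℝ². Define c₁(y) = ε·g(|y|)·(v·y/|y|) for y ≠ 0, where g(r) = -(2(1+α)/α)·r/(1 + a·r^{2α+2}). Then c₁ extends continuously by c₁(0)=0 and satisfies Δc₁ + |y|^{2α}·h₀·e^{U(y)}·c₁ = -ε·(v·y)·h₀·|y|^{2α}·e^{U(y)} in ℝ² \ {0}, where U(y) = -2·log(1 + a·|y|^{2α+2}). -/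
open Real

open scoped RealInnerProductSpace

noncomputable abbrev EE := EuclideanSpace ℝ (Fin 2)

noncomputable def innerR : EE →L[ℝ] (EE →L[ℝ] ℝ) :=
  LinearMap.mkContinuous
    { toFun := fun y => innerSL ℝ y
      map_add' := fun y z => by ext u; simp [inner_add_left]
      map_smul' := fun c y => by ext u; simp [inner_smul_left] }
    1 (fun y => by simp [innerSL_apply_norm])

@[simp] lemma innerR_apply (y u : EE) : innerR y u = ⟪y, u⟫ := rfl

lemma norm_sq_hasFDeriv (y : EE) :
    HasFDerivAt (fun z : EE => ‖z‖ ^ 2) ((2 : ℝ) • innerR y) y := by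
  have h := (hasStrictFDerivAt_norm_sq y).hasFDerivAt
  have e : (2 • (innerSL ℝ y) : EE →L[ℝ] ℝ) = (2 : ℝ) • innerR y := by
    ext u
    simp [two_smul]
  rwa [e] at h

noncomputable def auxP (a α t : ℝ) : ℝ := 1 + a * t ^ (α + 1)
noncomputable def auxF (a α K t : ℝ) : ℝ := -K / auxP a α t
noncomputable def auxF1 (a α K t : ℝ) : ℝ := K * (a * (α + 1)) * t ^ α / (auxP a α t) ^ 2
noncomputable def auxF2 (a α K t : ℝ) : ℝ :=
  (K * (a * (α + 1)) * (α * t ^ (α - 1)) * (auxP a α t) ^ 2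
    - K * (a * (α + 1)) * t ^ α * (2 * auxP a α t * (a * ((α + 1) * t ^ α)))) /
      ((auxP a α t) ^ 2) ^ 2

lemma auxP_pos {a α t : ℝ} (ha : 0 < a) (ht : 0 ≤ t) : 0 < auxP a α t := by
  have : 0 ≤ a * t ^ (α + 1) := mul_nonneg ha.le (Real.rpow_nonneg ht _)
  unfold auxP; linarith

lemma auxP_hasDeriv (a α : ℝ) {t : ℝ} (ht : 0 < t) :
    HasDerivAt (auxP a α) (a * ((α + 1) * t ^ α)) t := by
  have h := ((Real.hasDerivAt_rpow_const (x := t) (p := α + 1)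
    (Or.inl ht.ne')).const_mul a).const_add 1
  have e : auxP a α = fun x => 1 + a * x ^ (α + 1) := rfl
  rw [e]
  simpa [show α + 1 - 1 = α by ring] using h

lemma auxF_hasDeriv {a α K t : ℝ} (ha : 0 < a) (ht : 0 < t) :
    HasDerivAt (auxF a α K) (auxF1 a α K t) t := by
  have hPne := (auxP_pos (α := α) (t := t) ha ht.le).ne'
  have h : HasDerivAt (auxF a α K)
      ((0 * auxP a α t - -K * (a * ((α + 1) * t ^ α))) / auxP a α t ^ 2) t :=
    (hasDerivAt_const t (-K)).div (auxP_hasDeriv a α ht) hPne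
  convert h using 1
  unfold auxF1
  field_simp
  ring

lemma auxF1_hasDeriv {a α K t : ℝ} (ha : 0 < a) (ht : 0 < t) :
    HasDerivAt (auxF1 a α K) (auxF2 a α K t) t := by
  have hPne := (auxP_pos (α := α) (t := t) ha ht.le).ne'
  have hN : HasDerivAt (fun s : ℝ => K * (a * (α + 1)) * s ^ α)
      (K * (a * (α + 1)) * (α * t ^ (α - 1))) t :=
    (Real.hasDerivAt_rpow_const (x := t) (p := α) (Or.inl ht.ne')).const_mul _
  have hD : HasDerivAt (fun s : ℝ => (auxP a α s) ^ 2)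
      (2 * auxP a α t * (a * ((α + 1) * t ^ α))) t := by
    simpa [mul_comm, mul_assoc] using (auxP_hasDeriv a α ht).fun_pow 2
  have h : HasDerivAt (auxF1 a α K) (auxF2 a α K t) t := hN.div hD (pow_ne_zero 2 hPne)
  convert h using 1

lemma aux_key {α h₀ : ℝ} (hα : -1 < α) (hα0 : α ≠ 0) (hh : 0 < h₀) {a K : ℝ}
    (ha : a = h₀ / (8 * (1 + α) ^ 2)) (hK : K = 2 * (1 + α) / α) {t : ℝ} (ht : 0 < t) :
    8 * auxF1 a α K t + 4 * t * auxF2 a α K t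
      = -(h₀ * t ^ α * (auxF a α K t + 1) / (auxP a α t) ^ 2) := by
  have h1α : (0 : ℝ) < 1 + α := by linarith
  have ha0 : 0 < a := by rw [ha]; positivity
  have hPpos := auxP_pos (α := α) (t := t) ha0 ht.le
  have hPne := hPpos.ne'
  have h2 : t ^ (α + 1) = t ^ α * t := by
    rw [Real.rpow_add ht, Real.rpow_one]
  have h3 : t ^ (α - 1) = t ^ α / t := by
    rw [Real.rpow_sub ht, Real.rpow_one]
  have hPt : auxP a α t = 1 + a * (t ^ α * t) := by rw [auxP, h2]
  unfold auxF auxF1 auxF2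
  rw [h3, hPt, ha, hK]
  have h8 : (8 : ℝ) * (1 + α) ^ 2 ≠ 0 := by positivity
  rw [hPt, ha] at hPne
  field_simp
  ring

noncomputable def auxA (a α K ε : ℝ) (v : EE) (z : EE) : EE →L[ℝ] ℝ :=
  (ε * auxF a α K (‖z‖ ^ 2)) • (innerSL ℝ v : EE →L[ℝ] ℝ)
    + (ε * ⟪v, z⟫ * (auxF1 a α K (‖z‖ ^ 2) * 2)) • innerR z

lemma aux_hasFDerivAt_f {a α K : ℝ} (ε : ℝ) (v : EE) {y : EE} (ha : 0 < a) (hy : y ≠ 0) :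
    HasFDerivAt (fun z : EE => ε * ⟪v, z⟫ * auxF a α K (‖z‖ ^ 2)) (auxA a α K ε v y) y := by
  have ht : 0 < ‖y‖ ^ 2 := by
    have : 0 < ‖y‖ := norm_pos_iff.mpr hy
    positivity
  have h1 : HasFDerivAt (fun z : EE => ε * ⟪v, z⟫) (ε • (innerSL ℝ v : EE →L[ℝ] ℝ)) y :=
    (innerSL ℝ v).hasFDerivAt.const_mul ε
  have h4 : HasFDerivAt (fun z : EE => auxF a α K (‖z‖ ^ 2))
      (auxF1 a α K (‖y‖ ^ 2) • ((2 : ℝ) • innerR y)) y :=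
    by have := (auxF_hasDeriv (α := α) (K := K) ha ht).comp_hasFDerivAt y (norm_sq_hasFDeriv y); exact this
  have h5 := h1.mul h4
  refine h5.congr_fderiv ?_
  unfold auxA
  ext u
  simp
  ring

lemma aux_hasFDerivAt_A {a α K : ℝ} (ε : ℝ) (v : EE) {y : EE} (ha : 0 < a) (hy : y ≠ 0) :
    HasFDerivAt (auxA a α K ε v)
      (((ε * (auxF1 a α K (‖y‖ ^ 2) * 2)) • innerR y).smulRight (innerSL ℝ v : EE →L[ℝ] ℝ)
        + ((ε * ⟪v, y⟫ * (auxF1 a α K (‖y‖ ^ 2) * 2)) • innerR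
        + ((ε * (auxF1 a α K (‖y‖ ^ 2) * 2)) • (innerSL ℝ v : EE →L[ℝ] ℝ)
            + (ε * ⟪v, y⟫ * (auxF2 a α K (‖y‖ ^ 2) * 4)) • innerR y).smulRight (innerR y))) y := by
  have ht : 0 < ‖y‖ ^ 2 := by
    have : 0 < ‖y‖ := norm_pos_iff.mpr hy
    positivity
  have hq := norm_sq_hasFDeriv y
  have hσ : HasFDerivAt (fun z : EE => ε * auxF a α K (‖z‖ ^ 2))
      (ε • (auxF1 a α K (‖y‖ ^ 2) • ((2 : ℝ) • innerR y))) y :=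
    by have := (auxF_hasDeriv (α := α) (K := K) ha ht).comp_hasFDerivAt y hq; exact this.const_mul ε
  have hT1 := hσ.smul (hasFDerivAt_const (innerSL ℝ v : EE →L[ℝ] ℝ) y)
  have hl : HasFDerivAt (fun z : EE => ε * ⟪v, z⟫) (ε • (innerSL ℝ v : EE →L[ℝ] ℝ)) y :=
    (innerSL ℝ v).hasFDerivAt.const_mul ε
  have hτ : HasFDerivAt (fun z : EE => auxF1 a α K (‖z‖ ^ 2) * 2)
      ((2 : ℝ) • (auxF2 a α K (‖y‖ ^ 2) • ((2 : ℝ) • innerR y))) y :=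
    by have := (auxF1_hasDeriv (α := α) (K := K) ha ht).comp_hasFDerivAt y hq; exact this.mul_const 2
  have hd := hl.mul hτ
  have h := hT1.add (hd.smul innerR.hasFDerivAt)
  refine h.congr_fderiv ?_
  ext u w
  simp
  ring

noncomputable def lap (f : EuclideanSpace ℝ (Fin 2) → ℝ) (x : EuclideanSpace ℝ (Fin 2)) : ℝ :=
  ∑ i : Fin 2, iteratedFDeriv ℝ 2 f x ![EuclideanSpace.single i 1, EuclideanSpace.single i 1]

theorem stmt9 (α h₀ ε : ℝ) (hα : -1 < α) (hα0 : α ≠ 0) (hh : 0 < h₀) (hε : 0 < ε)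
    (a : ℝ) (ha : a = h₀ / (8 * (1 + α) ^ 2))
    (v : EuclideanSpace ℝ (Fin 2))
    (g : ℝ → ℝ) (hg : ∀ r, g r = -(2 * (1 + α) / α) * r / (1 + a * r ^ (2 * α + 2)))
    (c₁ U : EuclideanSpace ℝ (Fin 2) → ℝ)
    (hc₁0 : c₁ 0 = 0)
    (hc₁ : ∀ y, y ≠ 0 → c₁ y = ε * g ‖y‖ * ((inner ℝ v y : ℝ) / ‖y‖))
    (hU : ∀ y, U y = -2 * Real.log (1 + a * ‖y‖ ^ (2 * α + 2))) :
    ContinuousAt c₁ 0 ∧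
    ∀ y : EuclideanSpace ℝ (Fin 2), y ≠ 0 →
      lap c₁ y + ‖y‖ ^ (2 * α) * h₀ * Real.exp (U y) * c₁ y
        = -ε * (inner ℝ v y : ℝ) * h₀ * ‖y‖ ^ (2 * α) * Real.exp (U y) := by
  have h1α : (0 : ℝ) < 1 + α := by linarith
  have ha0 : 0 < a := by rw [ha]; positivity
  set K : ℝ := 2 * (1 + α) / α with hK
  -- the power identity
  have hpow : ∀ z : EuclideanSpace ℝ (Fin 2), ((‖z‖ ^ 2 : ℝ)) ^ (α + 1) = ‖z‖ ^ (2 * α + 2) := by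
    intro z
    rw [← Real.rpow_natCast ‖z‖ 2, ← Real.rpow_mul (norm_nonneg z)]
    norm_num
    ring_nf
  have hpow' : ∀ z : EuclideanSpace ℝ (Fin 2), ((‖z‖ ^ 2 : ℝ)) ^ α = ‖z‖ ^ (2 * α) := by
    intro z
    rw [← Real.rpow_natCast ‖z‖ 2, ← Real.rpow_mul (norm_nonneg z)]
    norm_num
  -- continuity
  constructor
  · unfold ContinuousAt
    rw [hc₁0]
    apply squeeze_zero_norm (a := fun z : EuclideanSpace ℝ (Fin 2) => (ε * |K| * ‖v‖) * ‖z‖)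
    · intro z
      rcases eq_or_ne z 0 with rfl | hz
      · simp [hc₁0]
      · have hr : 0 < ‖z‖ := norm_pos_iff.mpr hz
        have hPz : 0 < 1 + a * ‖z‖ ^ (2 * α + 2) := by
          have : 0 ≤ a * ‖z‖ ^ (2 * α + 2) :=
            mul_nonneg ha0.le (Real.rpow_nonneg (norm_nonneg z) _)
          linarith
        have hgb : |g ‖z‖| ≤ |K| * ‖z‖ := by
          rw [hg, abs_div, abs_mul, abs_neg, abs_of_pos hPz, abs_of_nonneg (norm_nonneg z)]
          rw [div_le_iff₀ hPz]
          have h0 : 0 ≤ a * ‖z‖ ^ (2 * α + 2) :=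
            mul_nonneg ha0.le (Real.rpow_nonneg (norm_nonneg z) _)
          nlinarith [abs_nonneg (2 * (1 + α) / α), norm_nonneg z,
            mul_nonneg (mul_nonneg (abs_nonneg (2 * (1 + α) / α)) (norm_nonneg z)) h0]
        have hib : |(inner ℝ v z : ℝ)| ≤ ‖v‖ * ‖z‖ := abs_real_inner_le_norm v z
        have hib' : |(inner ℝ v z : ℝ)| / ‖z‖ ≤ ‖v‖ := by
          rw [div_le_iff₀ hr]; exact hib
        rw [hc₁ z hz]
        rw [Real.norm_eq_abs, abs_mul, abs_mul, abs_div, abs_of_pos hε,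
          abs_of_nonneg (norm_nonneg z)]
        nlinarith [mul_le_mul hgb hib' (div_nonneg (abs_nonneg _) hr.le)
          (mul_nonneg (abs_nonneg K) (norm_nonneg z)), hε.le,
          mul_nonneg (abs_nonneg (g ‖z‖)) (div_nonneg (abs_nonneg (inner ℝ v z : ℝ)) hr.le)]
    · have : Filter.Tendsto (fun z : EuclideanSpace ℝ (Fin 2) => (ε * |K| * ‖v‖) * ‖z‖)
          (nhds 0) (nhds ((ε * |K| * ‖v‖) * ‖(0 : EuclideanSpace ℝ (Fin 2))‖)) :=
        (continuous_const.mul continuous_norm).tendsto 0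
      simpa using this
  -- the PDE
  · intro y hy
    have hr : 0 < ‖y‖ := norm_pos_iff.mpr hy
    have ht : 0 < ‖y‖ ^ 2 := by positivity
    set t : ℝ := ‖y‖ ^ 2 with htdef
    have hPpos : 0 < auxP a α t := auxP_pos ha0 ht.le
    have hPne := hPpos.ne'
    have hPeq : auxP a α t = 1 + a * ‖y‖ ^ (2 * α + 2) := by
      rw [auxP, hpow y]
    -- c₁ agrees with the smooth model
    have hceq : ∀ z : EuclideanSpace ℝ (Fin 2), z ≠ 0 →
        c₁ z = ε * (inner ℝ v z : ℝ) * auxF a α K (‖z‖ ^ 2) := by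
      intro z hz
      have hrz : (0:ℝ) < ‖z‖ := norm_pos_iff.mpr hz
      have hPz : 0 < auxP a α (‖z‖ ^ 2) := auxP_pos ha0 (by positivity)
      rw [hc₁ z hz, hg, auxF, auxP, hpow z]
      have hPz' : (1 : ℝ) + a * ‖z‖ ^ (2 * α + 2) ≠ 0 := by
        rw [← hpow z]
        have := hPz.ne'
        rwa [auxP] at this
      field_simp
    have hexp : Real.exp (U y) = ((auxP a α t) ^ 2)⁻¹ := by
      rw [hU, ← hPeq]
      rw [show -2 * Real.log (auxP a α t) = -(Real.log (auxP a α t) + Real.log (auxP a α t))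
        by ring, Real.exp_neg, Real.exp_add, Real.exp_log hPpos]
      rw [sq]
    -- Laplacian computation
    have hev : ∀ᶠ z in nhds y, z ≠ 0 := eventually_ne_nhds hy
    have hcf : c₁ =ᶠ[nhds y] fun z => ε * (inner ℝ v z : ℝ) * auxF a α K (‖z‖ ^ 2) :=
      hev.mono fun z hz => hceq z hz
    have hfA : (fderiv ℝ c₁) =ᶠ[nhds y] auxA a α K ε v := by
      refine (hcf.fderiv).trans (hev.mono fun z hz => ?_)
      exact (aux_hasFDerivAt_f ε v ha0 hz).fderiv
    have hd2 : fderiv ℝ (fderiv ℝ c₁) y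
        = ((ε * (auxF1 a α K t * 2)) • innerR y).smulRight (innerSL ℝ v : EE →L[ℝ] ℝ)
          + ((ε * ⟪v, y⟫ * (auxF1 a α K t * 2)) • innerR
          + ((ε * (auxF1 a α K t * 2)) • (innerSL ℝ v : EE →L[ℝ] ℝ)
              + (ε * ⟪v, y⟫ * (auxF2 a α K t * 4)) • innerR y).smulRight (innerR y)) := by
      rw [hfA.fderiv_eq, (aux_hasFDerivAt_A ε v ha0 hy).fderiv]
    have hinner : ∀ x z : EuclideanSpace ℝ (Fin 2),
        (inner ℝ x z : ℝ) = x 0 * z 0 + x 1 * z 1 := by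
      intro x z
      simp [PiLp.inner_apply, Fin.sum_univ_two]
      ring
    have hyy : y 0 * y 0 + y 1 * y 1 = t := by
      have := real_inner_self_eq_norm_sq y
      rw [hinner y y] at this
      exact this
    have hlap : lap c₁ y = ε * (inner ℝ v y : ℝ) *
        (8 * auxF1 a α K t + 4 * t * auxF2 a α K t) := by
      unfold lap
      have h2a : ∀ i : Fin 2, iteratedFDeriv ℝ 2 c₁ y
          ![EuclideanSpace.single i 1, EuclideanSpace.single i 1]
          = fderiv ℝ (fderiv ℝ c₁) y (EuclideanSpace.single i 1) (EuclideanSpace.single i 1) := by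
        intro i
        rw [iteratedFDeriv_two_apply]
        simp
      simp only [h2a, hd2]
      simp only [ContinuousLinearMap.add_apply, ContinuousLinearMap.smul_apply,
        ContinuousLinearMap.smulRight_apply, innerR_apply, innerSL_apply_apply, smul_eq_mul,
        Fin.sum_univ_two]
      simp only [hinner, EuclideanSpace.single_apply]
      norm_num
      linear_combination (4 * ε * (v 0 * y 0 + v 1 * y 1) * auxF2 a α K t) * hyy
    rw [hlap, hceq y hy, hexp, ← hpow' y]
    rw [aux_key hα hα0 hh ha hK ht]
    field_simp
    ring
end

section
/- Let α > 0, h₀ > 0, a = h₀/(8(1+α)²), b₀ ∈ ℝ, and v ∈ ℝ². The function w₁(y) = b₀·(h₀/(4α(1+α)))·(v·y/|y|)·|y|^{2α+3}/(1 + a·|y|^{2α+2})² satisfies Δw₁ + |y|^{2α}·h₀·e^{U}·w₁ = -|y|^{2α}·h₀·e^{U}·(v·y/|y|)·(|y| - (2(1+α)/α)·|y|/(1+a|y|^{2α+2}))·w₀ on ℝ² \ {0}, where U(y) = -2·log(1+a|y|^{2α+2}) and w₀(y) = b₀·(1 - a|y|^{2α+2})/(1 + a|y|^{2α+2}); moreover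 w₁(0) = 0 and ∇w₁(0) = 0. -/
open Real

noncomputable def phi0 (α a s : ℝ) : ℝ := s ^ (α+1) / (1 + a * s ^ (α+1)) ^ 2
noncomputable def phi1 (α a s : ℝ) : ℝ :=
  (α+1) * s ^ α * (1 - a * s ^ (α+1)) / (1 + a * s ^ (α+1)) ^ 3
noncomputable def phi2 (α a s : ℝ) : ℝ :=
  (α * (α+1) * s ^ (α-1) * (1 - a * s ^ (α+1))
    - a * ((α+1) * s ^ α) * ((α+1) * s ^ α)) / (1 + a * s ^ (α+1)) ^ 3
  - 3 * a * ((α+1) * s ^ α) * ((α+1) * s ^ α) * (1 - a * s ^ (α+1))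
      / (1 + a * s ^ (α+1)) ^ 4

section OneD
variable {α a : ℝ}

lemma hasDerivAt_tpow (α : ℝ) {s : ℝ} (hs : 0 < s) :
    HasDerivAt (fun s : ℝ => s ^ (α+1)) ((α+1) * s ^ α) s := by
  have := Real.hasDerivAt_rpow_const (x := s) (p := α+1) (Or.inl hs.ne')
  simpa [show α + 1 - 1 = α by ring] using this

lemma p_pos (ha : 0 < a) {s : ℝ} (hs : 0 < s) : 0 < 1 + a * s ^ (α+1) := by
  have : 0 < s ^ (α+1) := Real.rpow_pos_of_pos hs _
  positivity

lemma hasDerivAt_phi0 (ha : 0 < a) {s : ℝ} (hs : 0 < s) :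
    HasDerivAt (phi0 α a) (phi1 α a s) s := by
  have hp := p_pos (α := α) ha hs
  have ht := hasDerivAt_tpow α hs
  have hden : HasDerivAt (fun s : ℝ => (1 + a * s ^ (α+1)) ^ 2)
      (2 * (1 + a * s ^ (α+1)) ^ 1 * (a * ((α+1) * s ^ α))) s :=
    (((ht.const_mul a).const_add 1).pow 2)
  have := ht.div hden (by positivity)
  refine this.congr_deriv ?_
  unfold phi1
  field_simp
  ring

lemma hasDerivAt_phi1 (ha : 0 < a) {s : ℝ} (hs : 0 < s) :
    HasDerivAt (phi1 α a) (phi2 α a s) s := by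
  have hp := p_pos (α := α) ha hs
  have ht := hasDerivAt_tpow α hs
  have hA := Real.hasDerivAt_rpow_const (x := s) (p := α) (Or.inl hs.ne')
  have hnum : HasDerivAt (fun s : ℝ => (α+1) * s ^ α * (1 - a * s ^ (α+1)))
      ((α+1) * (α * s ^ (α-1)) * (1 - a * s ^ (α+1))
        + (α+1) * s ^ α * (-(a * ((α+1) * s ^ α)))) s :=
    ((hA.const_mul (α+1)).mul ((ht.const_mul a).const_sub 1))
  have hden : HasDerivAt (fun s : ℝ => (1 + a * s ^ (α+1)) ^ 3)
      (3 * (1 + a * s ^ (α+1)) ^ 2 * (a * ((α+1) * s ^ α))) s :=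
    (((ht.const_mul a).const_add 1).pow 3)
  have := hnum.div hden (by positivity)
  refine this.congr_deriv ?_
  unfold phi2
  field_simp
  ring

lemma contDiffAt_phi0 (ha : 0 < a) {s : ℝ} (hs : 0 < s) :
    ContDiffAt ℝ 2 (phi0 α a) s := by
  have hp := p_pos (α := α) ha hs
  have h1 : ContDiffAt ℝ 2 (fun s : ℝ => s ^ (α+1)) s :=
    Real.contDiffAt_rpow_const_of_ne hs.ne'
  have hden : ContDiffAt ℝ 2 (fun s : ℝ => (1 + a * s ^ (α+1)) ^ 2) s :=
    (contDiffAt_const.add (contDiffAt_const.mul h1)).pow 2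
  exact h1.div hden (by positivity)

lemma pow2_rpow {x : ℝ} (hx : 0 ≤ x) (q : ℝ) : (x ^ 2 : ℝ) ^ q = x ^ (2 * q) := by
  rw [← Real.rpow_natCast x 2, ← Real.rpow_mul hx]
  norm_num

end OneD

abbrev E2 := EuclideanSpace ℝ (Fin 2)

section TwoD
variable {α a c : ℝ} {v : E2}

lemma hasFDerivAt_w1 (ha : 0 < a) (z : E2) (hz : z ≠ 0)
    (hphi : HasDerivAt (phi0 α a) (phi1 α a (‖z‖^2)) (‖z‖^2)) :
    HasFDerivAt (fun z : E2 => c * (inner ℝ v z : ℝ) * phi0 α a (‖z‖^2))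
      ((c * phi0 α a (‖z‖^2)) • innerSL ℝ v
        + (2 * c * (inner ℝ v z : ℝ) * phi1 α a (‖z‖^2)) • innerSL ℝ z) z := by
  have hQ : HasFDerivAt (fun x : E2 => ‖x‖^2) ((2:ℕ) • (innerSL ℝ z)) z :=
    (hasStrictFDerivAt_norm_sq z).hasFDerivAt
  have hφQ : HasFDerivAt (fun z : E2 => phi0 α a (‖z‖^2))
      (phi1 α a (‖z‖^2) • ((2:ℕ) • (innerSL ℝ z))) z := by
    have := hphi.comp_hasFDerivAt z hQ; exact this
  have hL : HasFDerivAt (fun z : E2 => (inner ℝ v z : ℝ)) (innerSL ℝ v) z :=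
    (innerSL ℝ v).hasFDerivAt
  have := ((hL.const_mul c).mul hφQ)
  refine this.congr_fderiv ?_
  ext e
  simp [smul_smul]
  ring

lemma fderiv_Ge (y : E2) (e : E2)
    (h1 : HasDerivAt (phi0 α a) (phi1 α a (‖y‖^2)) (‖y‖^2))
    (h2 : HasDerivAt (phi1 α a) (phi2 α a (‖y‖^2)) (‖y‖^2)) :
    fderiv ℝ (fun z : E2 => c * phi0 α a (‖z‖^2) * (inner ℝ v e : ℝ)
        + 2 * c * (inner ℝ v z : ℝ) * phi1 α a (‖z‖^2) * (inner ℝ e z : ℝ)) y e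
      = c * (phi1 α a (‖y‖^2) * (2 * (inner ℝ y e : ℝ))) * (inner ℝ v e : ℝ)
        + ((2 * c * (inner ℝ v e : ℝ)) * phi1 α a (‖y‖^2)
            + 2 * c * (inner ℝ v y : ℝ) * (phi2 α a (‖y‖^2) * (2 * (inner ℝ y e : ℝ))))
          * (inner ℝ e y : ℝ)
        + 2 * c * (inner ℝ v y : ℝ) * phi1 α a (‖y‖^2) * (inner ℝ e e : ℝ) := by
  have hQ : HasFDerivAt (fun x : E2 => ‖x‖^2) ((2:ℕ) • (innerSL ℝ y)) y :=
    (hasStrictFDerivAt_norm_sq y).hasFDerivAt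
  have hφQ : HasFDerivAt (fun z : E2 => phi0 α a (‖z‖^2))
      (phi1 α a (‖y‖^2) • ((2:ℕ) • (innerSL ℝ y))) y := by
    have := h1.comp_hasFDerivAt y hQ; exact this
  have hφ1Q : HasFDerivAt (fun z : E2 => phi1 α a (‖z‖^2))
      (phi2 α a (‖y‖^2) • ((2:ℕ) • (innerSL ℝ y))) y := by
    have := h2.comp_hasFDerivAt y hQ; exact this
  have hLv : HasFDerivAt (fun z : E2 => (inner ℝ v z : ℝ)) (innerSL ℝ v) y :=
    (innerSL ℝ v).hasFDerivAt
  have hLe : HasFDerivAt (fun z : E2 => (inner ℝ e z : ℝ)) (innerSL ℝ e) y :=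
    (innerSL ℝ e).hasFDerivAt
  have hG := (((hφQ.const_mul c).mul_const (inner ℝ v e : ℝ)).add
      ((((hLv.const_mul (2*c)).mul hφ1Q).mul hLe)))
  rw [(show HasFDerivAt (fun z : E2 => c * phi0 α a (‖z‖^2) * (inner ℝ v e : ℝ)
      + 2 * c * (inner ℝ v z : ℝ) * phi1 α a (‖z‖^2) * (inner ℝ e z : ℝ)) _ y from hG).fderiv]
  simp [smul_smul]
  ring

lemma contDiffAt_w1 (ha : 0 < a) (y : E2) (hy : y ≠ 0) :
    ContDiffAt ℝ 2 (fun z : E2 => c * (inner ℝ v z : ℝ) * phi0 α a (‖z‖^2)) y := by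
  have hs : (0:ℝ) < ‖y‖^2 := by
    have : 0 < ‖y‖ := norm_pos_iff.mpr hy
    positivity
  have hQ : ContDiffAt ℝ 2 (fun z : E2 => ‖z‖^2) y := (contDiff_norm_sq ℝ).contDiffAt
  have hφ : ContDiffAt ℝ 2 (phi0 α a) (‖y‖^2) := contDiffAt_phi0 ha hs
  have hL : ContDiffAt ℝ 2 (fun z : E2 => (inner ℝ v z : ℝ)) y :=
    (innerSL ℝ v).contDiff.contDiffAt
  exact (contDiffAt_const.mul hL).mul (by have := hφ.comp y hQ; exact this)

end TwoD

set_option maxHeartbeats 1000000 in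
theorem stmt10 (α h₀ b₀ : ℝ) (hα : 0 < α) (hh : 0 < h₀)
    (a : ℝ) (ha : a = h₀ / (8 * (1 + α) ^ 2))
    (v : EuclideanSpace ℝ (Fin 2))
    (w₁ w₀ U : EuclideanSpace ℝ (Fin 2) → ℝ)
    (hw₁ : ∀ y, w₁ y = b₀ * (h₀ / (4 * α * (1 + α))) * ((inner ℝ v y : ℝ) / ‖y‖)
        * ‖y‖ ^ (2 * α + 3) / (1 + a * ‖y‖ ^ (2 * α + 2)) ^ 2)
    (hw₀ : ∀ y, w₀ y = b₀ * (1 - a * ‖y‖ ^ (2 * α + 2)) / (1 + a * ‖y‖ ^ (2 * α + 2)))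
    (hU : ∀ y, U y = -2 * Real.log (1 + a * ‖y‖ ^ (2 * α + 2))) :
    (∀ y : EuclideanSpace ℝ (Fin 2), y ≠ 0 →
      lap w₁ y + ‖y‖ ^ (2 * α) * h₀ * Real.exp (U y) * w₁ y
        = -(‖y‖ ^ (2 * α)) * h₀ * Real.exp (U y)
            * ((inner ℝ v y : ℝ) / ‖y‖)
            * (‖y‖ - (2 * (1 + α) / α) * ‖y‖ / (1 + a * ‖y‖ ^ (2 * α + 2)))
            * w₀ y) ∧
    w₁ 0 = 0 ∧ fderiv ℝ w₁ 0 = 0 := by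
  have h1α : (0:ℝ) < 1 + α := by linarith
  have ha' : 0 < a := by rw [ha]; positivity
  set c : ℝ := b₀ * (h₀ / (4 * α * (1 + α))) with hc
  -- representation of w₁
  have hrep : ∀ z : E2, w₁ z = c * (inner ℝ v z : ℝ) * phi0 α a (‖z‖^2) := by
    intro z
    rw [hw₁ z]
    unfold phi0
    rcases eq_or_ne z 0 with rfl | hz
    · simp [Real.zero_rpow (show (2*α+3:ℝ) ≠ 0 by positivity),
        Real.zero_rpow (show (α+1:ℝ) ≠ 0 by positivity)]
    · have hr : 0 < ‖z‖ := norm_pos_iff.mpr hz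
      have h2 : ((‖z‖:ℝ)^2) ^ (α+1) = ‖z‖ ^ (2*α+2) := by
        rw [pow2_rpow (norm_nonneg z), show 2*(α+1) = 2*α+2 by ring]
      have h3 : (‖z‖:ℝ) ^ (2*α+3) = ‖z‖ ^ (2*α+2) * ‖z‖ := by
        rw [show (2*α+3:ℝ) = (2*α+2)+1 by ring, Real.rpow_add_one hr.ne']
      rw [h2, h3]
      field_simp
  refine ⟨?_, ?_, ?_⟩
  · -- main PDE identity
    intro y hy
    have hr : 0 < ‖y‖ := norm_pos_iff.mpr hy
    have hs : (0:ℝ) < ‖y‖^2 := by positivity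
    have hphi0 := hasDerivAt_phi0 (α := α) ha' hs
    have hphi1 := hasDerivAt_phi1 (α := α) ha' hs
    have hw1fun : w₁ = fun z : E2 => c * (inner ℝ v z : ℝ) * phi0 α a (‖z‖^2) :=
      funext hrep
    have hfd : ∀ z : E2, z ≠ 0 → HasFDerivAt w₁
        ((c * phi0 α a (‖z‖^2)) • innerSL ℝ v
          + (2 * c * (inner ℝ v z : ℝ) * phi1 α a (‖z‖^2)) • innerSL ℝ z) z := by
      intro z hz
      rw [hw1fun]
      have hsz : (0:ℝ) < ‖z‖^2 := by
        have : 0 < ‖z‖ := norm_pos_iff.mpr hz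
        positivity
      exact hasFDerivAt_w1 ha' z hz (hasDerivAt_phi0 ha' hsz)
    have key : ∀ e : E2, fderiv ℝ (fderiv ℝ w₁) y e e
        = c * (phi1 α a (‖y‖^2) * (2 * (inner ℝ y e : ℝ))) * (inner ℝ v e : ℝ)
          + ((2 * c * (inner ℝ v e : ℝ)) * phi1 α a (‖y‖^2)
              + 2 * c * (inner ℝ v y : ℝ) * (phi2 α a (‖y‖^2) * (2 * (inner ℝ y e : ℝ))))
            * (inner ℝ e y : ℝ)
          + 2 * c * (inner ℝ v y : ℝ) * phi1 α a (‖y‖^2) * (inner ℝ e e : ℝ) := by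
      intro e
      have hdiff : DifferentiableAt ℝ (fderiv ℝ w₁) y := by
        have h2' : ContDiffAt ℝ 2 w₁ y := by
          rw [hw1fun]; exact contDiffAt_w1 ha' y hy
        have := h2'.fderiv_right (m := 1) (by norm_num)
        exact this.differentiableAt (by norm_num)
      have happ : fderiv ℝ (fun z => fderiv ℝ w₁ z e) y
          = (fderiv ℝ (fderiv ℝ w₁) y).flip e := by
        rw [fderiv_clm_apply hdiff (differentiableAt_const e)]
        simp
      have hev : (fun z => fderiv ℝ w₁ z e) =ᶠ[nhds y]
          (fun z : E2 => c * phi0 α a (‖z‖^2) * (inner ℝ v e : ℝ)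
            + 2 * c * (inner ℝ v z : ℝ) * phi1 α a (‖z‖^2) * (inner ℝ e z : ℝ)) := by
        filter_upwards [isOpen_ne.mem_nhds hy] with z hz
        rw [(hfd z hz).fderiv]
        simp only [ContinuousLinearMap.add_apply, ContinuousLinearMap.coe_smul',
          Pi.smul_apply, innerSL_apply_apply, smul_eq_mul]
        rw [real_inner_comm z e]
        try ring
      have : fderiv ℝ (fderiv ℝ w₁) y e e
          = fderiv ℝ (fun z => fderiv ℝ w₁ z e) y e := by
        rw [happ]; rfl
      rw [this, hev.fderiv_eq, fderiv_Ge y e hphi0 hphi1]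
    have hV : (inner ℝ v y : ℝ) = v 0 * y 0 + v 1 * y 1 := by
      simp [PiLp.inner_apply, Fin.sum_univ_two, RCLike.inner_apply]
      ring
    have hyy : ‖y‖^2 = y 0^2 + y 1^2 := by
      rw [EuclideanSpace.norm_eq, Real.sq_sqrt (by positivity), Fin.sum_univ_two,
        Real.norm_eq_abs, Real.norm_eq_abs, sq_abs, sq_abs]
    have hlap : lap w₁ y
        = c * (inner ℝ v y : ℝ)
          * (4 * (‖y‖^2) * phi2 α a (‖y‖^2) + 8 * phi1 α a (‖y‖^2)) := by
      unfold lap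
      have hit : ∀ i : Fin 2, iteratedFDeriv ℝ 2 w₁ y
          ![EuclideanSpace.single i 1, EuclideanSpace.single i 1]
          = fderiv ℝ (fderiv ℝ w₁) y (EuclideanSpace.single i 1)
              (EuclideanSpace.single i 1) := by
        intro i
        rw [iteratedFDeriv_two_apply]
        simp
      rw [Fin.sum_univ_two, hit 0, hit 1, key _, key _]
      simp only [EuclideanSpace.inner_single_right, EuclideanSpace.inner_single_left,
        EuclideanSpace.single_apply]
      simp only [starRingEnd_apply, star_trivial, if_true, map_one, one_mul, mul_one]
      rw [hV, hyy]
      ring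
    -- final algebraic identity
    rw [hlap, hU y, hw₀ y, hrep y]
    have h22 : (‖y‖:ℝ) ^ (2*α+2) = (‖y‖^2) ^ (α+1) := by
      rw [pow2_rpow (norm_nonneg y), show 2*(α+1) = 2*α+2 by ring]
    have h20 : (‖y‖:ℝ) ^ (2*α) = (‖y‖^2) ^ α := by
      rw [pow2_rpow (norm_nonneg y)]
    rw [h22, h20]
    set s : ℝ := ‖y‖^2 with hsdef
    have hexp : Real.exp (-2 * Real.log (1 + a * s ^ (α+1)))
        = ((1 + a * s ^ (α+1))^2)⁻¹ := by
      have hp := p_pos (α := α) ha' hs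
      rw [mul_comm, Real.exp_mul, Real.exp_log hp,
        show (-2:ℝ) = -(2:ℕ) by norm_num, Real.rpow_neg hp.le, Real.rpow_natCast]
    rw [hexp]
    have eB1 : s ^ α = s^(α-1) * s := by
      rw [show α = (α-1)+1 by ring, Real.rpow_add_one hs.ne']
      ring_nf
    have eB2 : s ^ (α+1) = s^(α-1) * s^2 := by
      rw [show α+1 = (α-1)+1+1 by ring, Real.rpow_add_one hs.ne',
        Real.rpow_add_one hs.ne']
      ring
    unfold phi0 phi1 phi2
    rw [eB1, eB2]
    have hB : (0:ℝ) < s^(α-1) := Real.rpow_pos_of_pos hs _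
    set B : ℝ := s^(α-1) with hBdef
    have hp : (0:ℝ) < 1 + a * (B * s^2) := by positivity
    have hh0 : h₀ = 8*a*(1+α)^2 := by rw [ha]; field_simp
    have hcc : c = 2*a*b₀*(1+α)/α := by rw [hc, hh0]; field_simp; ring
    rw [hcc, hh0]
    field_simp
    ring
  · -- w₁ 0 = 0
    rw [hrep 0]
    simp
  · -- fderiv at 0
    have h0 : w₁ 0 = 0 := by rw [hrep 0]; simp
    have hK : (0:ℝ) < |c| * ‖v‖ + 1 := by positivity
    set K : ℝ := |c| * ‖v‖ + 1 with hKdef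
    have : HasFDerivAt w₁ (0 : E2 →L[ℝ] ℝ) 0 := by
      rw [hasFDerivAt_iff_isLittleO_nhds_zero]
      simp only [zero_add, h0, ContinuousLinearMap.zero_apply, sub_zero]
      rw [Asymptotics.isLittleO_iff]
      intro ε hε
      have hδ : (0:ℝ) < min 1 (ε / K) := lt_min one_pos (by positivity)
      filter_upwards [Metric.ball_mem_nhds (0:E2) hδ] with z hz
      rw [Metric.mem_ball, dist_zero_right] at hz
      rcases eq_or_ne z 0 with rfl | hzne
      · simp [h0]
      · have hrz : 0 < ‖z‖ := norm_pos_iff.mpr hzne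
        have hz1 : ‖z‖ ≤ 1 := le_of_lt (lt_of_lt_of_le hz (min_le_left _ _))
        have hzε : ‖z‖ < ε / K := lt_of_lt_of_le hz (min_le_right _ _)
        have hphi_nonneg : 0 ≤ phi0 α a (‖z‖^2) := by
          unfold phi0
          have h1 : (0:ℝ) ≤ (‖z‖^2) ^ (α+1) := Real.rpow_nonneg (by positivity) _
          have h2 : (0:ℝ) < 1 + a * (‖z‖^2) ^ (α+1) :=
            p_pos ha' (by positivity : (0:ℝ) < ‖z‖^2)
          positivity
        have hphi_le : phi0 α a (‖z‖^2) ≤ ‖z‖ := by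
          have h2' : (1:ℝ) ≤ (1 + a * (‖z‖^2) ^ (α+1))^2 := by
            have h1 : (0:ℝ) ≤ (‖z‖^2) ^ (α+1) := Real.rpow_nonneg (by positivity) _
            nlinarith [mul_nonneg ha'.le h1]
          have step1 : phi0 α a (‖z‖^2) ≤ (‖z‖^2) ^ (α+1) := by
            unfold phi0
            exact div_le_self (Real.rpow_nonneg (by positivity) _) h2'
          have step2 : ((‖z‖:ℝ)^2) ^ (α+1) = ‖z‖ ^ (2*α+2) := by
            rw [pow2_rpow (norm_nonneg z), show 2*(α+1) = 2*α+2 by ring]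
          have step3 : (‖z‖:ℝ) ^ (2*α+2) ≤ ‖z‖ ^ (1:ℝ) :=
            Real.rpow_le_rpow_of_exponent_ge hrz hz1 (by linarith)
          rw [step2] at step1
          rw [Real.rpow_one] at step3
          linarith
        have hinner : |(inner ℝ v z : ℝ)| ≤ ‖v‖ * ‖z‖ := abs_real_inner_le_norm v z
        rw [hrep z, Real.norm_eq_abs, abs_mul, abs_mul,
          abs_of_nonneg hphi_nonneg]
        have hVb : |c| * |(inner ℝ v z : ℝ)| ≤ K * ‖z‖ := by
          calc |c| * |(inner ℝ v z : ℝ)| ≤ |c| * (‖v‖ * ‖z‖) := by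
                exact mul_le_mul_of_nonneg_left hinner (abs_nonneg c)
            _ ≤ K * ‖z‖ := by
                rw [hKdef]; nlinarith [norm_nonneg z, abs_nonneg c, norm_nonneg v]
        calc |c| * |(inner ℝ v z : ℝ)| * phi0 α a (‖z‖^2)
            ≤ (K * ‖z‖) * phi0 α a (‖z‖^2) := by
              exact mul_le_mul_of_nonneg_right hVb hphi_nonneg
          _ ≤ (K * ‖z‖) * ‖z‖ := by
              have : (0:ℝ) ≤ K * ‖z‖ := by positivity
              exact mul_le_mul_of_nonneg_left hphi_le this
          _ ≤ K * (ε / K) * ‖z‖ := by nlinarith [mul_le_mul_of_nonneg_left hzε.le (mul_nonneg hK.le (norm_nonneg z))]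
          _ = ε * ‖z‖ := by field_simp
          _ ≤ ε * ‖(z:E2)‖ := le_refl _
    exact this.fderiv
end

section
/- For α > -1 with α ∉ ℕ and integer l ≥ 1, any C² solution φ_l of φ_l'' + (1/r)φ_l' + (8(1+α)²r^{2α}e^{U_α} - l²/r²)φ_l = 0 on (0,∞) with lim_{r→0} φ_l(r) = 0 and |φ_l(r)| ≤ C(1+r)^τ for some τ ∈ [0,1) must vanish identically: φ_l ≡ 0. -/
open Real Filter Topology Set
open scoped NNReal

namespace Stmt11Aux

noncomputable def G0 (c β s : ℝ) : ℝ := ((c/β+1) + (c/β-1)*s)/(1+s)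

noncomputable def G1 (c β s : ℝ) : ℝ := c * G0 c β s - 4*β*s/(1+s)^2

noncomputable def G1d (c β s : ℝ) : ℝ := (-2*c*(1+s) - 4*β*(1-s))/(1+s)^3

noncomputable def Fs (c β : ℝ) : ℝ → ℝ := fun r => r ^ c * G0 c β (r ^ (2*β))

noncomputable def Fd (c β : ℝ) : ℝ → ℝ := fun r => r ^ (c-1) * G1 c β (r ^ (2*β))

noncomputable def Fdd (c β : ℝ) : ℝ → ℝ := fun r =>
  r ^ (c-1-1) * ((c-1) * G1 c β (r ^ (2*β)) + 2*β * r ^ (2*β) * G1d c β (r ^ (2*β)))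

noncomputable def Qf (α : ℝ) (l : ℕ) (U : ℝ → ℝ) : ℝ → ℝ :=
  fun t => 8*(1+α)^2 * t ^ (2*α) * Real.exp (U t) - (l:ℝ)^2/t^2

lemma hasDerivAt_G0 (c β : ℝ) {s : ℝ} (hs : 0 < s) :
    HasDerivAt (G0 c β) (-2/(1+s)^2) s := by
  have h1 : (1:ℝ) + s ≠ 0 := by positivity
  have hnum : HasDerivAt (fun s : ℝ => (c/β+1) + (c/β-1)*s) (c/β-1) s := by
    simpa using ((hasDerivAt_id s).const_mul (c/β-1)).const_add (c/β+1)
  have hden : HasDerivAt (fun s : ℝ => 1 + s) 1 s := by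
    simpa using (hasDerivAt_id s).const_add (1:ℝ)
  have := hnum.div hden h1
  refine this.congr_deriv ?_
  field_simp
  ring

lemma hasDerivAt_G1 (c β : ℝ) {s : ℝ} (hs : 0 < s) :
    HasDerivAt (G1 c β) (G1d c β s) s := by
  have h1 : (1:ℝ) + s ≠ 0 := by positivity
  have h2 := (hasDerivAt_G0 c β hs).const_mul c
  have hnum : HasDerivAt (fun s : ℝ => 4*β*s) (4*β) s := by
    simpa using (hasDerivAt_id s).const_mul (4*β)
  have hden : HasDerivAt (fun s : ℝ => (1+s)^2) (2*(1+s)) s := by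
    have h : HasDerivAt (fun s : ℝ => 1 + s) 1 s := by
      simpa using (hasDerivAt_id s).const_add (1:ℝ)
    simpa using h.fun_pow 2
  have h3 := hnum.div hden (pow_ne_zero 2 h1)
  have := h2.sub h3
  refine this.congr_deriv ?_
  unfold G1d
  field_simp
  ring

lemma hasDerivAt_pow_mul {β c : ℝ} {G Gd : ℝ → ℝ}
    (hG : ∀ s, 0 < s → HasDerivAt G (Gd s) s) {r : ℝ} (hr : 0 < r) :
    HasDerivAt (fun x : ℝ => x ^ c * G (x ^ (2*β)))
      (r ^ (c-1) * (c * G (r ^ (2*β)) + 2*β * r ^ (2*β) * Gd (r ^ (2*β)))) r := by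
  have hs : 0 < r ^ (2*β) := Real.rpow_pos_of_pos hr _
  have h1 : HasDerivAt (fun x : ℝ => x ^ (2*β)) (2*β * r ^ (2*β-1)) r :=
    Real.hasDerivAt_rpow_const (Or.inl hr.ne')
  have h2 : HasDerivAt (fun x : ℝ => G (x ^ (2*β))) (Gd (r ^ (2*β)) * (2*β * r ^ (2*β-1))) r :=
    (hG _ hs).comp r h1
  have h3 : HasDerivAt (fun x : ℝ => x ^ c) (c * r ^ (c-1)) r :=
    Real.hasDerivAt_rpow_const (Or.inl hr.ne')
  have := h3.mul h2
  refine this.congr_deriv ?_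
  have e1 : r ^ (c-1) = r ^ c / r := by rw [Real.rpow_sub hr, Real.rpow_one]
  have e2 : r ^ (2*β-1) = r ^ (2*β) / r := by rw [Real.rpow_sub hr, Real.rpow_one]
  rw [e1, e2]
  field_simp

lemma hasDerivAt_Fs (c β : ℝ) {r : ℝ} (hr : 0 < r) :
    HasDerivAt (Fs c β) (Fd c β r) r := by
  have := hasDerivAt_pow_mul (β := β) (c := c) (fun s hs => hasDerivAt_G0 c β hs) hr
  refine this.congr_deriv ?_
  unfold Fd G1
  ring

lemma hasDerivAt_Fd (c β : ℝ) {r : ℝ} (hr : 0 < r) :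
    HasDerivAt (Fd c β) (Fdd c β r) r :=
  hasDerivAt_pow_mul (β := β) (c := c-1) (fun s hs => hasDerivAt_G1 c β hs) hr

lemma ode_Fs (c β : ℝ) (hβ : 0 < β) {r : ℝ} (hr : 0 < r) :
    Fdd c β r + (1/r) * Fd c β r
      + (8*β^2 * (r ^ (2*β) / r^2) / (1 + r ^ (2*β))^2 - c^2/r^2) * Fs c β r = 0 := by
  have hs : 0 < r ^ (2*β) := Real.rpow_pos_of_pos hr _
  have h1 : (1:ℝ) + r ^ (2*β) ≠ 0 := by positivity
  have e1 : r ^ (c-1) = r ^ c / r := by rw [Real.rpow_sub hr, Real.rpow_one]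
  have e2 : r ^ (c-1-1) = r ^ c / r / r := by
    rw [Real.rpow_sub hr, Real.rpow_sub hr, Real.rpow_one]
  unfold Fdd Fd Fs G1d G1 G0
  rw [e1, e2]
  have hrc : r ^ c ≠ 0 := (Real.rpow_pos_of_pos hr c).ne'
  field_simp
  ring

lemma Fs_one (c β : ℝ) : Fs c β 1 = c/β := by
  unfold Fs G0
  rw [Real.one_rpow, Real.one_rpow]
  ring

lemma Fd_one (c β : ℝ) : Fd c β 1 = c^2/β - β := by
  unfold Fd G1 G0
  rw [Real.one_rpow, Real.one_rpow]
  ring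

lemma exp_U {x : ℝ} (hx : 0 < x) :
    Real.exp (-2 * Real.log x) = (x^2)⁻¹ := by
  rw [show -2 * Real.log x = Real.log (x ^ (-2:ℤ)) by
      rw [Real.log_zpow]; push_cast; ring]
  rw [Real.exp_log (by positivity), zpow_neg]
  norm_cast

lemma coeff_eq (α : ℝ) {r : ℝ} (hr : 0 < r) :
    8*(1+α)^2 * r ^ (2*α) * Real.exp (-2 * Real.log (1 + r ^ (2*α+2)))
      = 8*(1+α)^2 * (r ^ (2*(1+α)) / r^2) / (1 + r ^ (2*(1+α)))^2 := by
  rw [show 2*α+2 = 2*(1+α) from by ring,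
    exp_U (show (0:ℝ) < 1 + r ^ (2*(1+α)) by positivity)]
  have h2 : r ^ (2*α) = r ^ (2*(1+α)) / r^2 := by
    rw [show ((r:ℝ)^2) = r ^ ((2:ℕ):ℝ) from (Real.rpow_natCast r 2).symm, ← Real.rpow_sub hr]
    congr 1
    push_cast
    ring
  rw [h2]
  field_simp

lemma G0_eq (c β s : ℝ) (hs : (1:ℝ) + s ≠ 0) : G0 c β s = (c/β - 1) + 2/(1+s) := by
  unfold G0; field_simp; ring

lemma tendsto_G0_atTop (c β : ℝ) : Tendsto (G0 c β) atTop (𝓝 (c/β - 1)) := by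
  have h1 : Tendsto (fun s : ℝ => (c/β - 1) + 2/(1+s)) atTop (𝓝 ((c/β - 1) + 0)) := by
    apply Tendsto.const_add
    have h2 : Tendsto (fun s : ℝ => 1 + s) atTop atTop := tendsto_atTop_add_const_left _ _ tendsto_id
    simpa [div_eq_mul_inv] using (h2.inv_tendsto_atTop).const_mul (2:ℝ)
  rw [add_zero] at h1
  apply h1.congr'
  filter_upwards [eventually_gt_atTop 0] with s hs
  rw [G0_eq c β s (by positivity)]

lemma continuousAt_G0 (c β : ℝ) : ContinuousAt (G0 c β) 0 := by
  unfold G0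
  apply ContinuousAt.div
  · fun_prop
  · fun_prop
  · norm_num

lemma G0_zero (c β : ℝ) : G0 c β 0 = c/β + 1 := by unfold G0; simp

lemma contOn_Qf (α : ℝ) (l : ℕ) (U : ℝ → ℝ)
    (hU : ∀ r, U r = -2 * Real.log (1 + r ^ (2*α+2))) {s : Set ℝ} (hs : ∀ x ∈ s, (0:ℝ) < x) :
    ContinuousOn (Qf α l U) s := by
  intro t ht
  have htpos := hs t ht
  apply ContinuousAt.continuousWithinAt
  have hUf : U = fun r => -2 * Real.log (1 + r ^ (2*α+2)) := funext hU
  unfold Qf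
  rw [hUf]
  have h1 : ContinuousAt (fun t:ℝ => t ^ (2*α)) t :=
    Real.continuousAt_rpow_const t _ (Or.inl htpos.ne')
  have h2 : ContinuousAt (fun t:ℝ => t ^ (2*α+2)) t :=
    Real.continuousAt_rpow_const t _ (Or.inl htpos.ne')
  have h3 : ContinuousAt (fun t:ℝ => 1 + t ^ (2*α+2)) t := continuousAt_const.add h2
  have h4 : ContinuousAt (fun t:ℝ => Real.log (1 + t ^ (2*α+2))) t :=
    (Real.continuousAt_log (by positivity)).comp h3
  have h5 : ContinuousAt (fun t:ℝ => Real.exp (-2 * Real.log (1 + t ^ (2*α+2)))) t :=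
    Real.continuous_exp.continuousAt.comp (continuousAt_const.mul h4)
  have h6 : ContinuousAt (fun t:ℝ => (l:ℝ)^2/t^2) t :=
    ContinuousAt.div continuousAt_const (by fun_prop) (by positivity)
  exact ((continuousAt_const.mul h1).mul h5).sub h6

lemma ode_unique (Q : ℝ → ℝ) {lo hi : ℝ} (hlo : 0 < lo) (hlh : lo ≤ hi)
    (hQ : ContinuousOn Q (Set.Icc lo hi))
    (f f' : ℝ → ℝ)
    (hf : ∀ t ∈ Set.Ioo lo hi, HasDerivAt f (f' t) t)
    (hf' : ∀ t ∈ Set.Ioo lo hi, HasDerivAt f' (-(1/t) * f' t - Q t * f t) t)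
    (t₀ : ℝ) (ht₀ : t₀ ∈ Set.Ioo lo hi) (h₀ : f t₀ = 0) (h₀' : f' t₀ = 0) :
    ∀ t ∈ Set.Ioo lo hi, f t = 0 := by
  obtain ⟨M, hM⟩ := isCompact_Icc.exists_bound_of_continuousOn hQ
  have hM0 : 0 ≤ M := (norm_nonneg _).trans (hM lo ⟨le_rfl, hlh⟩)
  set K : ℝ≥0 := (1 + 1/lo + M).toNNReal with hK
  have hKcoe : (K:ℝ) = 1 + 1/lo + M := Real.coe_toNNReal _ (by positivity)
  have hK1 : (1:ℝ) ≤ (K:ℝ) := by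
    rw [hKcoe]
    have : 0 ≤ 1/lo := by positivity
    linarith
  set v : ℝ → ℝ × ℝ → ℝ × ℝ := fun x p =>
    (p.2, -(1/(max lo (min x hi))) * p.2 - Q (max lo (min x hi)) * p.1) with hv
  have hπmem : ∀ x : ℝ, max lo (min x hi) ∈ Set.Icc lo hi :=
    fun x => ⟨le_max_left _ _, max_le hlh (min_le_right _ _)⟩
  have hπpos : ∀ x : ℝ, 0 < max lo (min x hi) :=
    fun x => lt_of_lt_of_le hlo (le_max_left _ _)
  have hlip : ∀ x, LipschitzOnWith K (v x) Set.univ := by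
    intro x
    apply LipschitzWith.lipschitzOnWith
    apply LipschitzWith.of_dist_le_mul
    intro p q
    set m := max lo (min x hi) with hm
    have hmpos : 0 < m := hπpos x
    have hQm : |Q m| ≤ M := by
      have := hM _ (hπmem x); rwa [Real.norm_eq_abs] at this
    have hd0 : (0:ℝ) ≤ dist p q := dist_nonneg
    have hd1 : dist p.1 q.1 ≤ dist p q := by
      rw [Prod.dist_eq]; exact le_max_left _ _
    have hd2 : dist p.2 q.2 ≤ dist p q := by
      rw [Prod.dist_eq]; exact le_max_right _ _
    rw [hv]
    simp only
    rw [Prod.dist_eq]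
    apply max_le
    · calc dist p.2 q.2 ≤ dist p q := hd2
        _ ≤ K * dist p q := le_mul_of_one_le_left hd0 hK1
    · calc dist (-(1/m) * p.2 - Q m * p.1) (-(1/m) * q.2 - Q m * q.1)
          = |(-(1/m) * p.2 - Q m * p.1) - (-(1/m) * q.2 - Q m * q.1)| := Real.dist_eq _ _
        _ = |(-(1/m)) * (p.2 - q.2) - Q m * (p.1 - q.1)| := by congr 1; ring
        _ ≤ |(-(1/m)) * (p.2 - q.2)| + |Q m * (p.1 - q.1)| := by
            have h := norm_sub_le ((-(1/m)) * (p.2 - q.2)) (Q m * (p.1 - q.1))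
            simpa only [Real.norm_eq_abs] using h
        _ = (1/m) * |p.2 - q.2| + |Q m| * |p.1 - q.1| := by
            rw [abs_mul, abs_mul, abs_neg, abs_of_pos (by positivity : (0:ℝ) < 1/m)]
        _ = (1/m) * dist p.2 q.2 + |Q m| * dist p.1 q.1 := by
            rw [Real.dist_eq, Real.dist_eq]
        _ ≤ (1/lo) * dist p q + M * dist p q := by
            apply add_le_add
            · exact mul_le_mul (one_div_le_one_div_of_le hlo (le_max_left _ _)) hd2
                dist_nonneg (by positivity)
            · exact mul_le_mul hQm hd1 dist_nonneg hM0
        _ ≤ K * dist p q := by rw [hKcoe]; nlinarith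
  have happ := ODE_solution_unique_of_mem_Ioo (v := v) (s := fun _ => Set.univ) (K := K) (fun t _ => hlip t)
    (f := fun t => (f t, f' t)) (g := fun _ => ((0:ℝ), (0:ℝ))) (t₀ := t₀) ht₀
    (fun t ht => by
      have hπt : max lo (min t hi) = t := by
        rw [min_eq_left ht.2.le, max_eq_right ht.1.le]
      constructor
      · have h1 := (hf t ht).prodMk (hf' t ht)
        have h2 : v t (f t, f' t) = (f' t, -(1/t) * f' t - Q t * f t) := by
          rw [hv]; simp only; rw [hπt]
        rw [h2]; exact h1
      · trivial)
    (fun t ht => by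
      constructor
      · have h2 : v t ((0:ℝ), (0:ℝ)) = ((0:ℝ), (0:ℝ)) := by
          rw [hv]; simp
        rw [h2]; exact hasDerivAt_const _ _
      · trivial)
    (by simp [h₀, h₀'])
  intro t ht
  have := happ ht
  exact congrArg Prod.fst this

end Stmt11Aux

open Stmt11Aux

theorem stmt11 (α : ℝ) (hα : -1 < α) (hαn : ∀ n : ℕ, α ≠ n)
    (l : ℕ) (hl : 1 ≤ l)
    (φ U : ℝ → ℝ)
    (hφ : ContDiffOn ℝ 2 φ (Set.Ioi 0))
    (hU : ∀ r, U r = -2 * Real.log (1 + r ^ (2 * α + 2)))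
    (heq : ∀ r : ℝ, 0 < r →
      deriv (deriv φ) r + (1 / r) * deriv φ r
        + (8 * (1 + α) ^ 2 * r ^ (2 * α) * Real.exp (U r) - (l : ℝ) ^ 2 / r ^ 2) * φ r = 0)
    (h0 : Filter.Tendsto φ (nhdsWithin 0 (Set.Ioi 0)) (nhds 0))
    (C τ : ℝ) (hτ0 : 0 ≤ τ) (hτ1 : τ < 1)
    (hbound : ∀ r : ℝ, 0 < r → |φ r| ≤ C * (1 + r) ^ τ) :
    ∀ r : ℝ, 0 < r → φ r = 0 := by
  have hβ : (0:ℝ) < 1 + α := by linarith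
  have hlpos : (0:ℝ) < (l:ℝ) := by exact_mod_cast hl
  have hl1R : (1:ℝ) ≤ (l:ℝ) := by exact_mod_cast hl
  have hlβ : (l:ℝ) ≠ 1 + α := by
    intro h
    apply hαn (l - 1)
    have h1 : ((l - 1 : ℕ) : ℝ) = (l:ℝ) - 1 := by
      rw [Nat.cast_sub hl]; norm_num
    rw [h1]; linarith
  have hν : (l:ℝ)/(1+α) - 1 ≠ 0 := by
    intro h
    apply hlβ
    field_simp at h
    linarith
  have hWr : (l:ℝ)^2/(1+α) - (1+α) ≠ 0 := by
    intro h
    have h2 : ((l:ℝ) - (1+α)) * ((l:ℝ) + (1+α)) = 0 := by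
      field_simp at h
      nlinarith
    rcases mul_eq_zero.1 h2 with h3 | h3
    · exact hlβ (by linarith)
    · linarith
  -- derivatives of φ
  have hφ1 : ∀ t : ℝ, 0 < t → HasDerivAt φ (deriv φ t) t := fun t ht =>
    ((hφ.differentiableOn (by norm_num)).differentiableAt (isOpen_Ioi.mem_nhds ht)).hasDerivAt
  have hφd : ContDiffOn ℝ 1 (deriv φ) (Set.Ioi 0) :=
    hφ.deriv_of_isOpen isOpen_Ioi (by norm_num)
  have hφ2 : ∀ t : ℝ, 0 < t → HasDerivAt (deriv φ) (deriv (deriv φ) t) t := fun t ht =>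
    ((hφd.differentiableOn (by norm_num)).differentiableAt (isOpen_Ioi.mem_nhds ht)).hasDerivAt
  -- ODE in terms of Qf
  have hφode : ∀ t : ℝ, 0 < t →
      deriv (deriv φ) t = -(1/t) * deriv φ t - Qf α l U t * φ t := by
    intro t ht
    have h := heq t ht
    simp only [Qf]
    linarith
  have hFode : ∀ c : ℝ, c^2 = ((l:ℝ))^2 → ∀ t : ℝ, 0 < t →
      Fdd c (1+α) t = -(1/t) * Fd c (1+α) t - Qf α l U t * Fs c (1+α) t := by
    intro c hc t ht
    have h1 := ode_Fs c (1+α) hβ ht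
    rw [hc] at h1
    have h2 : Qf α l U t
        = 8*(1+α)^2 * (t ^ (2*(1+α)) / t^2) / (1 + t ^ (2*(1+α)))^2 - (l:ℝ)^2/t^2 := by
      simp only [Qf]
      rw [hU t, coeff_eq α ht]
    rw [h2]
    linarith
  have hWr2 : (l:ℝ)^2 - (1+α)^2 ≠ 0 := by
    intro h
    apply hWr
    field_simp
    linarith
  -- coefficients a, b matching value and derivative of φ at 1
  set a : ℝ := (φ 1 * (1+α) / l + deriv φ 1 / ((l:ℝ)^2/(1+α) - (1+α)))/2 with ha_def
  set b : ℝ := (deriv φ 1 / ((l:ℝ)^2/(1+α) - (1+α)) - φ 1 * (1+α) / l)/2 with hb_def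
  have hψ1 : φ 1 - a * Fs (l:ℝ) (1+α) 1 - b * Fs (-(l:ℝ)) (1+α) 1 = 0 := by
    rw [Fs_one, Fs_one, ha_def, hb_def]
    have key : (φ 1 * (1+α)/l) * ((l:ℝ)/(1+α)) = φ 1 := by
      field_simp
    linear_combination -key
  have hDψ1 : deriv φ 1 - a * Fd (l:ℝ) (1+α) 1 - b * Fd (-(l:ℝ)) (1+α) 1 = 0 := by
    rw [Fd_one, Fd_one, ha_def, hb_def]
    have key : deriv φ 1 / ((l:ℝ)^2/(1+α) - (1+α)) * ((l:ℝ)^2/(1+α) - (1+α)) = deriv φ 1 :=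
      div_mul_cancel₀ _ hWr
    linear_combination -key
  -- representation of φ
  have hrep : ∀ t : ℝ, 0 < t →
      φ t - a * Fs (l:ℝ) (1+α) t - b * Fs (-(l:ℝ)) (1+α) t = 0 := by
    intro t ht
    set lo : ℝ := min t 1 / 2 with hlo_def
    set hi : ℝ := max t 1 + 1 with hhi_def
    have hlo : 0 < lo := by
      rw [hlo_def]
      have : 0 < min t 1 := lt_min ht one_pos
      positivity
    have hlo1 : lo < 1 := by
      rw [hlo_def]
      have : min t 1 ≤ 1 := min_le_right _ _
      linarith
    have hlot : lo < t := by
      rw [hlo_def]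
      have h1 : min t 1 ≤ t := min_le_left _ _
      linarith
    have hhit : t < hi := by
      rw [hhi_def]
      have : t ≤ max t 1 := le_max_left _ _
      linarith
    have hhi1 : (1:ℝ) < hi := by
      rw [hhi_def]
      have : (1:ℝ) ≤ max t 1 := le_max_right _ _
      linarith
    have hlh : lo ≤ hi := by linarith
    have hQcont : ContinuousOn (Qf α l U) (Set.Icc lo hi) :=
      contOn_Qf α l U hU (fun x hx => lt_of_lt_of_le hlo hx.1)
    have happ := ode_unique (Qf α l U) hlo hlh hQcont
      (fun t => φ t - a * Fs (l:ℝ) (1+α) t - b * Fs (-(l:ℝ)) (1+α) t)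
      (fun t => deriv φ t - a * Fd (l:ℝ) (1+α) t - b * Fd (-(l:ℝ)) (1+α) t)
      (fun s hs => by
        have hs0 : 0 < s := lt_trans hlo hs.1
        exact ((hφ1 s hs0).sub ((hasDerivAt_Fs (l:ℝ) (1+α) hs0).const_mul a)).sub
          ((hasDerivAt_Fs (-(l:ℝ)) (1+α) hs0).const_mul b))
      (fun s hs => by
        have hs0 : 0 < s := lt_trans hlo hs.1
        have hD := ((hφ2 s hs0).sub ((hasDerivAt_Fd (l:ℝ) (1+α) hs0).const_mul a)).sub
          ((hasDerivAt_Fd (-(l:ℝ)) (1+α) hs0).const_mul b)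
        have e : deriv (deriv φ) s - a * Fdd (l:ℝ) (1+α) s - b * Fdd (-(l:ℝ)) (1+α) s
            = -(1/s) * (deriv φ s - a * Fd (l:ℝ) (1+α) s - b * Fd (-(l:ℝ)) (1+α) s)
              - Qf α l U s * (φ s - a * Fs (l:ℝ) (1+α) s - b * Fs (-(l:ℝ)) (1+α) s) := by
          rw [hφode s hs0, hFode (l:ℝ) rfl s hs0, hFode (-(l:ℝ)) (by ring) s hs0]
          ring
        exact e ▸ hD)
      1 ⟨hlo1, hhi1⟩ hψ1 hDψ1
    exact happ t ⟨hlot, hhit⟩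
  -- C is nonnegative
  have hC0 : 0 ≤ C := by
    have h1 := hbound 1 one_pos
    have h2 : (0:ℝ) < (1+1:ℝ) ^ τ := Real.rpow_pos_of_pos (by norm_num) τ
    nlinarith [abs_nonneg (φ 1)]
  -- a = 0 from growth at infinity
  have hT1 : Tendsto (fun t => φ t / t ^ ((l:ℝ))) atTop (𝓝 0) := by
    apply squeeze_zero_norm' (a := fun t : ℝ => (C * 2^τ) * t^(τ-1))
    · filter_upwards [eventually_ge_atTop (1:ℝ)] with t ht1
      have ht : (0:ℝ) < t := lt_of_lt_of_le one_pos ht1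
      have h1 : |φ t| ≤ C * (1+t)^τ := hbound t ht
      have h2 : (1+t)^τ ≤ (2*t)^τ := Real.rpow_le_rpow (by linarith) (by linarith) hτ0
      have h3 : ((2:ℝ)*t)^τ = 2^τ * t^τ := Real.mul_rpow (by norm_num) ht.le
      have h4 : t ≤ t^((l:ℝ)) := by
        calc t = t^(1:ℝ) := (Real.rpow_one t).symm
          _ ≤ t^((l:ℝ)) := Real.rpow_le_rpow_of_exponent_le ht1 hl1R
      have h5 : 0 < t^((l:ℝ)) := Real.rpow_pos_of_pos ht _
      rw [Real.norm_eq_abs, abs_div, abs_of_pos h5]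
      have hnn : 0 ≤ C * (2^τ * t^τ) := by positivity
      calc |φ t| / t^((l:ℝ)) ≤ (C * (2^τ * t^τ)) / t^((l:ℝ)) := by
            apply (div_le_div_iff_of_pos_right h5).mpr
            calc |φ t| ≤ C * (1+t)^τ := h1
              _ ≤ C * (2*t)^τ := by
                  apply mul_le_mul_of_nonneg_left h2 hC0
              _ = C * (2^τ * t^τ) := by rw [h3]
        _ ≤ (C * (2^τ * t^τ)) / t := by
            apply div_le_div_of_nonneg_left hnn ht h4
        _ = (C * 2^τ) * t^(τ-1) := by
            rw [Real.rpow_sub ht, Real.rpow_one]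
            ring
    · have h2 : Tendsto (fun t:ℝ => t^(τ-1)) atTop (𝓝 0) := by
        rw [show τ - 1 = -(1-τ) from by ring]
        exact tendsto_rpow_neg_atTop (by linarith)
      simpa using h2.const_mul (C*2^τ)
  have hT2 : Tendsto (fun t => φ t / t ^ ((l:ℝ))) atTop
      (𝓝 (a * ((l:ℝ)/(1+α) - 1))) := by
    have hG1 : Tendsto (fun t:ℝ => G0 (l:ℝ) (1+α) (t^(2*(1+α)))) atTop
        (𝓝 ((l:ℝ)/(1+α) - 1)) :=
      (tendsto_G0_atTop _ _).comp (tendsto_rpow_atTop (by linarith))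
    have hG2 : Tendsto (fun t:ℝ => t^(-(2*((l:ℝ)))) * G0 (-(l:ℝ)) (1+α) (t^(2*(1+α)))) atTop
        (𝓝 (0 * ((-(l:ℝ))/(1+α) - 1))) :=
      (tendsto_rpow_neg_atTop (by positivity)).mul
        ((tendsto_G0_atTop _ _).comp (tendsto_rpow_atTop (by linarith)))
    have hcomb := (hG1.const_mul a).add (hG2.const_mul b)
    simp only [zero_mul, mul_zero, add_zero] at hcomb
    apply Filter.Tendsto.congr' _ hcomb
    filter_upwards [eventually_gt_atTop (0:ℝ)] with t ht
    have htl : t^((l:ℝ)) ≠ 0 := (Real.rpow_pos_of_pos ht _).ne'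
    have hφt : φ t = a * (t^((l:ℝ)) * G0 (l:ℝ) (1+α) (t^(2*(1+α))))
        + b * (t^(-((l:ℝ))) * G0 (-(l:ℝ)) (1+α) (t^(2*(1+α)))) := by
      have h := hrep t ht
      simp only [Fs] at h
      linarith
    have e : t^(-((l:ℝ))) = t^(-(2*((l:ℝ)))) * t^((l:ℝ)) := by
      rw [← Real.rpow_add ht]
      congr 1
      ring
    rw [eq_div_iff htl, hφt, e]
    ring
  have ha : a = 0 := by
    have h := tendsto_nhds_unique hT2 hT1
    exact (mul_eq_zero.1 h).resolve_right hν
  -- b = 0 from behavior at 0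
  have hT3 : Tendsto (fun t => φ t * t ^ ((l:ℝ))) (𝓝[>] (0:ℝ)) (𝓝 0) := by
    have hl0 : Tendsto (fun t:ℝ => t^((l:ℝ))) (𝓝[>] (0:ℝ)) (𝓝 0) := by
      have hc := (Real.continuousAt_rpow_const 0 (l:ℝ) (Or.inr hlpos.le)).tendsto
      rw [Real.zero_rpow hlpos.ne'] at hc
      exact hc.mono_left nhdsWithin_le_nhds
    simpa using h0.mul hl0
  have hT4 : Tendsto (fun t => φ t * t ^ ((l:ℝ))) (𝓝[>] (0:ℝ))
      (𝓝 (b * ((-(l:ℝ))/(1+α) + 1))) := by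
    have hs0 : Tendsto (fun t:ℝ => t^(2*(1+α))) (𝓝[>] (0:ℝ)) (𝓝 0) := by
      have hc := (Real.continuousAt_rpow_const 0 (2*(1+α)) (Or.inr (by linarith))).tendsto
      rw [Real.zero_rpow (by linarith : 2*(1+α) ≠ 0)] at hc
      exact hc.mono_left nhdsWithin_le_nhds
    have hG := ((continuousAt_G0 (-(l:ℝ)) (1+α)).tendsto.comp hs0).const_mul b
    rw [G0_zero] at hG
    apply Filter.Tendsto.congr' _ hG
    filter_upwards [self_mem_nhdsWithin] with t ht
    have ht0 : (0:ℝ) < t := ht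
    have htl : t^((l:ℝ)) ≠ 0 := (Real.rpow_pos_of_pos ht0 _).ne'
    have hφt : φ t = b * (t^(-((l:ℝ))) * G0 (-(l:ℝ)) (1+α) (t^(2*(1+α)))) := by
      have h := hrep t ht0
      rw [ha] at h
      simp only [Fs] at h
      linarith
    have e : t^(-((l:ℝ))) * t^((l:ℝ)) = 1 := by
      rw [← Real.rpow_add ht0]
      norm_num
    show b * G0 (-(l:ℝ)) (1+α) (t^(2*(1+α))) = φ t * t^((l:ℝ))
    rw [hφt]
    have e2 : b * (t ^ (-((l:ℝ))) * G0 (-(l:ℝ)) (1+α) (t ^ (2*(1+α)))) * t ^ ((l:ℝ))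
        = b * G0 (-(l:ℝ)) (1+α) (t ^ (2*(1+α))) * (t ^ (-((l:ℝ))) * t ^ ((l:ℝ))) := by ring
    rw [e2, e, mul_one]
  have hb : b = 0 := by
    have h := tendsto_nhds_unique hT4 hT3
    have hfac : (-(l:ℝ))/(1+α) + 1 ≠ 0 := by
      intro hz
      apply hlβ
      field_simp at hz
      linarith
    exact (mul_eq_zero.1 h).resolve_right hfac
  intro r hr
  have h := hrep r hr
  rw [ha, hb] at h
  simpa using h
end

section
/- For h₀ > 0, the functions f₁(r) = r/(1+r²) and f₂(r) = -1/(2r(1+r²)) + 2r·log r/(1+r²) + r³/(2(1+r²)) are two linearly independent solutions of the ODE f'' + (1/r)f' + (8·e^{U(r)} - 1/r²)f = 0 on (0,∞), where U(r) = -2·log(1+r²); their Wronskian satisfies W(f₁,f₂)(r) = f₁(r)f₂'(r) - f₁'(r)f₂(r) = 1/r. -/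
open Real

private lemma aux_e1 (r : ℝ) : HasDerivAt (fun x : ℝ => 1 + x ^ 2) (2 * r) r := by
  simpa using (hasDerivAt_pow 2 r).const_add 1

private lemma aux_L1 (r : ℝ) :
    HasDerivAt (fun x : ℝ => x / (1 + x ^ 2)) ((1 - r ^ 2) / (1 + r ^ 2) ^ 2) r := by
  have h : (1 : ℝ) + r ^ 2 ≠ 0 := by positivity
  have H := (hasDerivAt_id r).div (aux_e1 r) h
  refine H.congr_deriv ?_
  simp only [id, Pi.pow_apply]
  field_simp
  ring

private lemma aux_L1' (r : ℝ) :
    HasDerivAt (fun x : ℝ => (1 - x ^ 2) / (1 + x ^ 2) ^ 2)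
      ((2 * r ^ 3 - 6 * r) / (1 + r ^ 2) ^ 3) r := by
  have h : ((1 : ℝ) + r ^ 2) ^ 2 ≠ 0 := by positivity
  have hnum : HasDerivAt (fun x : ℝ => 1 - x ^ 2) (-(2 * r)) r := by
    simpa using (hasDerivAt_pow 2 r).const_sub 1
  have H := hnum.div ((aux_e1 r).pow 2) h
  refine H.congr_deriv ?_
  have h1 : (1 : ℝ) + r ^ 2 ≠ 0 := by positivity
  simp only [id, Pi.pow_apply]
  field_simp
  ring

private lemma aux_L2 (r : ℝ) (hr : 0 < r) :
    HasDerivAt (fun x : ℝ => -1 / (2 * x * (1 + x ^ 2)) + 2 * x * Real.log x / (1 + x ^ 2)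
        + x ^ 3 / (2 * (1 + x ^ 2)))
      ((r ^ 4 + 6 * r ^ 2 + 1) / (2 * r ^ 2 * (1 + r ^ 2))
        + 2 * (1 - r ^ 2) * Real.log r / (1 + r ^ 2) ^ 2) r := by
  have hr0 : r ≠ 0 := ne_of_gt hr
  have h1 : (1 : ℝ) + r ^ 2 ≠ 0 := by positivity
  have hden : HasDerivAt (fun x : ℝ => 2 * x * (1 + x ^ 2))
      (2 * 1 * (1 + r ^ 2) + 2 * r * (2 * r)) r :=
    ((hasDerivAt_id r).const_mul 2).mul (aux_e1 r)
  have hdne : 2 * r * (1 + r ^ 2) ≠ 0 := by positivity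
  have hA := (hasDerivAt_const r (-1 : ℝ)).div hden hdne
  have hBnum : HasDerivAt (fun x : ℝ => 2 * x * Real.log x)
      (2 * 1 * Real.log r + 2 * r * r⁻¹) r :=
    ((hasDerivAt_id r).const_mul 2).mul (Real.hasDerivAt_log hr0)
  have hB := hBnum.div (aux_e1 r) h1
  have hCden : HasDerivAt (fun x : ℝ => 2 * (1 + x ^ 2)) (2 * (2 * r)) r :=
    (aux_e1 r).const_mul 2
  have hCdne : 2 * ((1 : ℝ) + r ^ 2) ≠ 0 := by positivity
  have hC := (hasDerivAt_pow 3 r).div hCden hCdne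
  have H := (hA.add hB).add hC
  refine H.congr_deriv ?_
  field_simp
  ring

private lemma aux_L2' (r : ℝ) (hr : 0 < r) :
    HasDerivAt (fun x : ℝ => (x ^ 4 + 6 * x ^ 2 + 1) / (2 * x ^ 2 * (1 + x ^ 2))
        + 2 * (1 - x ^ 2) * Real.log x / (1 + x ^ 2) ^ 2)
      (-(5 * r ^ 4 + 2 * r ^ 2 + 1) / (r ^ 3 * (1 + r ^ 2) ^ 2)
        + 2 * (2 * r ^ 3 - 6 * r) * Real.log r / (1 + r ^ 2) ^ 3
        + 2 * (1 - r ^ 2) / (r * (1 + r ^ 2) ^ 2)) r := by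
  have hr0 : r ≠ 0 := ne_of_gt hr
  have h1 : (1 : ℝ) + r ^ 2 ≠ 0 := by positivity
  have hAnum : HasDerivAt (fun x : ℝ => x ^ 4 + 6 * x ^ 2 + 1)
      ((4 : ℝ) * r ^ 3 + 6 * (2 * r) + 0) r := by
    have := ((hasDerivAt_pow 4 r).add ((hasDerivAt_pow 2 r).const_mul 6)).add_const 1
    simpa using this
  have hAden : HasDerivAt (fun x : ℝ => 2 * x ^ 2 * (1 + x ^ 2))
      (2 * (2 * r) * (1 + r ^ 2) + 2 * r ^ 2 * (2 * r)) r := by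
    have hp : HasDerivAt (fun x : ℝ => 2 * x ^ 2) (2 * (2 * r)) r := by
      simpa using (hasDerivAt_pow 2 r).const_mul 2
    exact hp.mul (aux_e1 r)
  have hAdne : 2 * r ^ 2 * (1 + r ^ 2) ≠ 0 := by positivity
  have hA := hAnum.div hAden hAdne
  have hBnum : HasDerivAt (fun x : ℝ => 2 * (1 - x ^ 2) * Real.log x)
      (2 * (-(2 * r)) * Real.log r + 2 * (1 - r ^ 2) * r⁻¹) r := by
    have hs : HasDerivAt (fun x : ℝ => 1 - x ^ 2) (-(2 * r)) r := by
      simpa using (hasDerivAt_pow 2 r).const_sub 1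
    exact (hs.const_mul 2).mul (Real.hasDerivAt_log hr0)
  have hBdne : ((1 : ℝ) + r ^ 2) ^ 2 ≠ 0 := by positivity
  have hB := hBnum.div ((aux_e1 r).pow 2) hBdne
  have H := hA.add hB
  refine H.congr_deriv ?_
  simp only [id, Pi.pow_apply]
  field_simp
  ring

theorem stmt12 (f₁ f₂ U : ℝ → ℝ)
    (hf₁ : ∀ r, f₁ r = r / (1 + r ^ 2))
    (hf₂ : ∀ r, f₂ r = -1 / (2 * r * (1 + r ^ 2)) + 2 * r * Real.log r / (1 + r ^ 2)
        + r ^ 3 / (2 * (1 + r ^ 2)))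
    (hU : ∀ r, U r = -2 * Real.log (1 + r ^ 2)) :
    (∀ r : ℝ, 0 < r →
      deriv (deriv f₁) r + (1 / r) * deriv f₁ r + (8 * Real.exp (U r) - 1 / r ^ 2) * f₁ r = 0) ∧
    (∀ r : ℝ, 0 < r →
      deriv (deriv f₂) r + (1 / r) * deriv f₂ r + (8 * Real.exp (U r) - 1 / r ^ 2) * f₂ r = 0) ∧
    (∀ r : ℝ, 0 < r → f₁ r * deriv f₂ r - deriv f₁ r * f₂ r = 1 / r) ∧
    (∀ c₁ c₂ : ℝ, (∀ r : ℝ, 0 < r → c₁ * f₁ r + c₂ * f₂ r = 0) → c₁ = 0 ∧ c₂ = 0) := by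
  have hf₁fun : f₁ = fun x : ℝ => x / (1 + x ^ 2) := funext hf₁
  have hf₂fun : f₂ = fun x : ℝ => -1 / (2 * x * (1 + x ^ 2)) + 2 * x * Real.log x / (1 + x ^ 2)
      + x ^ 3 / (2 * (1 + x ^ 2)) := funext hf₂
  have hderiv₁ : deriv f₁ = fun x : ℝ => (1 - x ^ 2) / (1 + x ^ 2) ^ 2 := by
    funext x
    rw [hf₁fun]
    exact (aux_L1 x).deriv
  have hderiv₁' : ∀ r : ℝ, deriv (deriv f₁) r = (2 * r ^ 3 - 6 * r) / (1 + r ^ 2) ^ 3 := by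
    intro r
    rw [hderiv₁]
    exact (aux_L1' r).deriv
  have hderiv₂ : ∀ r : ℝ, 0 < r → deriv f₂ r = (r ^ 4 + 6 * r ^ 2 + 1) / (2 * r ^ 2 * (1 + r ^ 2))
      + 2 * (1 - r ^ 2) * Real.log r / (1 + r ^ 2) ^ 2 := by
    intro r hr
    rw [hf₂fun]
    exact (aux_L2 r hr).deriv
  have hderiv₂' : ∀ r : ℝ, 0 < r → deriv (deriv f₂) r =
      -(5 * r ^ 4 + 2 * r ^ 2 + 1) / (r ^ 3 * (1 + r ^ 2) ^ 2)
        + 2 * (2 * r ^ 3 - 6 * r) * Real.log r / (1 + r ^ 2) ^ 3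
        + 2 * (1 - r ^ 2) / (r * (1 + r ^ 2) ^ 2) := by
    intro r hr
    have hev : deriv f₂ =ᶠ[nhds r] fun x : ℝ =>
        (x ^ 4 + 6 * x ^ 2 + 1) / (2 * x ^ 2 * (1 + x ^ 2))
          + 2 * (1 - x ^ 2) * Real.log x / (1 + x ^ 2) ^ 2 := by
      filter_upwards [IsOpen.mem_nhds isOpen_Ioi hr] with x hx
      exact hderiv₂ x hx
    rw [hev.deriv_eq]
    exact (aux_L2' r hr).deriv
  have hexp : ∀ r : ℝ, Real.exp (U r) = ((1 + r ^ 2) ^ 2)⁻¹ := by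
    intro r
    have ha : (0 : ℝ) < 1 + r ^ 2 := by positivity
    rw [hU, show (-2 : ℝ) * Real.log (1 + r ^ 2) = Real.log (((1 + r ^ 2) ^ 2)⁻¹) by
      rw [Real.log_inv, Real.log_pow]; push_cast; ring]
    exact Real.exp_log (by positivity)
  refine ⟨?_, ?_, ?_, ?_⟩
  · intro r hr
    have hr0 : r ≠ 0 := ne_of_gt hr
    have h1 : (1 : ℝ) + r ^ 2 ≠ 0 := by positivity
    rw [hderiv₁' r, hderiv₁, hexp r, hf₁ r]
    field_simp
    ring
  · intro r hr
    have hr0 : r ≠ 0 := ne_of_gt hr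
    have h1 : (1 : ℝ) + r ^ 2 ≠ 0 := by positivity
    rw [hderiv₂' r hr, hderiv₂ r hr, hexp r, hf₂ r]
    field_simp
    ring
  · intro r hr
    have hr0 : r ≠ 0 := ne_of_gt hr
    have h1 : (1 : ℝ) + r ^ 2 ≠ 0 := by positivity
    rw [hderiv₂ r hr, hderiv₁, hf₁ r, hf₂ r]
    field_simp
    ring
  · intro c₁ c₂ h
    have h1 := h 1 one_pos
    have h2 := h 2 two_pos
    rw [hf₁ 1, hf₂ 1] at h1
    rw [hf₁ 2, hf₂ 2] at h2
    rw [Real.log_one] at h1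
    have hc₁ : c₁ = 0 := by nlinarith [h1]
    subst hc₁
    have hlog : 0 < Real.log 2 := Real.log_pos (by norm_num)
    refine ⟨rfl, ?_⟩
    norm_num at h2
    rcases h2 with h2 | h2
    · exact h2
    · nlinarith [h2, hlog]
end

section
/- For α > -1, h₀ > 0, a = h₀/(8(1+α)²), λ ∈ ℝ and τ > 0, one has ∫_{B_τ} h₀·|x|^{2α}·e^{λ}/(1 + a·e^{λ}·|x|^{2α+2})² dx = 8π(1+α)·(1 - e^{-λ}/(e^{-λ} + a·τ^{2α+2})). -/
open Real MeasureTheory Set Metric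

theorem stmt14 (α h₀ lam τ : ℝ) (hα : -1 < α) (hh : 0 < h₀) (hτ : 0 < τ)
    (a : ℝ) (ha : a = h₀ / (8 * (1 + α) ^ 2)) :
    ∫ x in Metric.ball (0 : EuclideanSpace ℝ (Fin 2)) τ,
        h₀ * ‖x‖ ^ (2 * α) * Real.exp lam / (1 + a * Real.exp lam * ‖x‖ ^ (2 * α + 2)) ^ 2
      = 8 * Real.pi * (1 + α)
          * (1 - Real.exp (-lam) / (Real.exp (-lam) + a * τ ^ (2 * α + 2))) := by
  have hα1 : (0:ℝ) < 1 + α := by linarith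
  have hp : (0:ℝ) < 2 * α + 2 := by linarith
  have hapos : 0 < a := by rw [ha]; positivity
  set b := a * Real.exp lam with hb
  have hbpos : 0 < b := by positivity
  set p : ℝ := 2 * α + 2 with hpdef
  set T : ℝ := τ ^ p with hT
  have hTpos : 0 < T := rpow_pos_of_pos hτ p
  set C : ℝ := h₀ / p * Real.exp lam with hC
  set F : ℝ → ℝ := fun r => h₀ * r ^ (2 * α) * Real.exp lam / (1 + b * r ^ p) ^ 2 with hF
  set g : ℝ → ℝ := Set.indicator (Set.Iio T) (fun u => C / (1 + b * u) ^ 2) with hg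
  -- Step 1: reduce to a radial integral
  have step1 : (∫ x in Metric.ball (0 : EuclideanSpace ℝ (Fin 2)) τ,
        h₀ * ‖x‖ ^ (2 * α) * Real.exp lam / (1 + a * Real.exp lam * ‖x‖ ^ (2 * α + 2)) ^ 2)
      = ∫ x : EuclideanSpace ℝ (Fin 2), (Set.indicator (Set.Iio τ) F) ‖x‖ := by
    rw [← integral_indicator measurableSet_ball]
    congr 1
    funext x
    by_cases hx : ‖x‖ < τ
    · rw [Set.indicator_of_mem (mem_ball_zero_iff.mpr hx),
        Set.indicator_of_mem (Set.mem_Iio.mpr hx)]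
    · rw [Set.indicator_of_notMem (fun h => hx (mem_ball_zero_iff.mp h)),
        Set.indicator_of_notMem (fun h => hx (Set.mem_Iio.mp h))]
  rw [step1, MeasureTheory.integral_fun_norm_addHaar volume (Set.indicator (Set.Iio τ) F)]
  have hdim : Module.finrank ℝ (EuclideanSpace ℝ (Fin 2)) = 2 := finrank_euclideanSpace_fin
  rw [hdim]
  have hvol : (volume (Metric.ball (0 : EuclideanSpace ℝ (Fin 2)) 1)).toReal = π := by
    rw [EuclideanSpace.volume_ball]
    simp only [Fintype.card_fin]
    norm_num [Real.Gamma_two, ENNReal.toReal_ofReal, Real.sq_sqrt pi_pos.le]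
    exact pi_pos.le
  rw [measureReal_def, hvol]
  -- Step 2: substitution y ↦ y ^ p
  have step2 : (∫ y in Set.Ioi (0:ℝ), y ^ (2 - 1) • (Set.indicator (Set.Iio τ) F) y)
      = ∫ u in Set.Ioi (0:ℝ), g u := by
    rw [← MeasureTheory.integral_comp_rpow_Ioi_of_pos (g := g) hp]
    refine setIntegral_congr_fun measurableSet_Ioi ?_
    intro y hy
    have hy0 : 0 < y := hy
    simp only [pow_one, smul_eq_mul, hg, Set.indicator_apply, Set.mem_Iio, hF]
    have hiff : y ^ p < T ↔ y < τ := by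
      rw [hT]; exact Real.rpow_lt_rpow_iff hy0.le hτ.le hp
    by_cases hcase : y < τ
    · rw [if_pos hcase, if_pos (hiff.mpr hcase)]
      have hyp : y ^ (p - 1) = y ^ (2 * α) * y := by
        rw [show p - 1 = 2 * α + 1 by rw [hpdef]; ring, Real.rpow_add hy0, Real.rpow_one]
      rw [hyp, hC]
      field_simp
      ring
    · rw [if_neg hcase, if_neg (fun h => hcase (hiff.mp h))]
      simp
  rw [step2]
  -- Step 3: compute the u-integral
  have step3 : (∫ u in Set.Ioi (0:ℝ), g u) = C / b * (1 - (1 + b * T)⁻¹) := by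
    rw [hg, setIntegral_indicator measurableSet_Iio, Set.Ioi_inter_Iio,
      ← MeasureTheory.integral_Ioc_eq_integral_Ioo, ← intervalIntegral.integral_of_le hTpos.le]
    have hne : ∀ u ∈ Set.uIcc (0:ℝ) T, 1 + b * u ≠ 0 := by
      intro u hu
      rw [Set.uIcc_of_le hTpos.le] at hu
      have : 0 ≤ u := hu.1
      positivity
    have hft : ∀ u ∈ Set.uIcc (0:ℝ) T,
        HasDerivAt (fun u => -(C / b) * (1 + b * u)⁻¹) (C / (1 + b * u) ^ 2) u := by
      intro u hu
      have h1 : HasDerivAt (fun u : ℝ => 1 + b * u) b u := by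
        simpa using (hasDerivAt_id u).const_mul b |>.const_add 1
      have h2 := (h1.inv (hne u hu)).const_mul (-(C / b))
      exact h2.congr_deriv (by rw [neg_div, neg_mul_neg, mul_div_assoc', div_mul_cancel₀ _ hbpos.ne'])
    have hint : IntervalIntegrable (fun u => C / (1 + b * u) ^ 2) volume 0 T := by
      apply ContinuousOn.intervalIntegrable
      exact continuousOn_const.div
        ((continuousOn_const.add (continuousOn_const.mul continuousOn_id)).pow 2)
        (fun u hu => pow_ne_zero 2 (hne u hu))
    rw [intervalIntegral.integral_eq_sub_of_hasDerivAt hft hint]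
    have h0 : (1:ℝ) + b * 0 = 1 := by ring
    rw [h0]
    have hbT : (0:ℝ) < 1 + b * T := by positivity
    field_simp
    ring
  rw [step3]
  -- Step 4: arithmetic
  have hCb : C / b = 4 * (1 + α) := by
    rw [hC, hb, ha, hpdef]
    have hexp : Real.exp lam ≠ 0 := (Real.exp_pos lam).ne'
    have hα0 : (1:ℝ) + α ≠ 0 := hα1.ne'
    field_simp
    ring
    field_simp
    ring
  have hfrac : Real.exp (-lam) / (Real.exp (-lam) + a * T) = (1 + b * T)⁻¹ := by
    rw [hb, Real.exp_neg]
    have hexp : (0:ℝ) < Real.exp lam := Real.exp_pos lam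
    have hden : (0:ℝ) < (Real.exp lam)⁻¹ + a * T := by positivity
    have hden2 : (0:ℝ) < 1 + a * Real.exp lam * T := by positivity
    field_simp
  rw [hCb, hfrac]
  have : (2:ℕ) • π • (4 * (1 + α) * (1 - (1 + b * T)⁻¹))
      = 8 * π * (1 + α) * (1 - (1 + b * T)⁻¹) := by
    rw [nsmul_eq_mul, smul_eq_mul]; push_cast; ring
  rw [this]
end
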